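/- arXiv:1303.0369 — 6 statements merged into one kernel-verified Lean document; each statement's English description precedes it below -/
import Mathlib

section
/- Let G be a finite connected simple graph such that vertices i and j are distinct and not adjacent in G, and let G+ij be the graph obtained from G by adding a new edge ij. Then C(G+ij) − C(G) = 1/Ω_G(i,j) + Σ_{pq ∈ E(G)} [Ω_G(p,i)+Ω_G(q,j)−Ω_G(p,j)−Ω_G(q,i)]² / ( 4Ω_G(p,q)²(1+Ω_G(i,j)) − Ω_G(p,q)·[Ω_G(p,i)+Ω_G(q,j)−Ω_G(p,j)−Ω_G(q,i)]² ). -/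
open Matrix Finset

/-- The Moore–Penrose pseudoinverse of a real square matrix, specified (when it exists)
by the four Penrose conditions. -/
noncomputable def pinv {n : Type*} [Fintype n] [DecidableEq n] (A : Matrix n n ℝ) :
    Matrix n n ℝ :=
  open scoped Classical in
  if h : ∃ B, A * B * A = A ∧ B * A * B = B ∧ (A * B)ᵀ = A * B ∧ (B * A)ᵀ = B * A
  then h.choose else 0

/-- The resistance distance between two vertices of a graph:
`Ω_G(i,j) = (e_i − e_j)ᵀ L⁺ (e_i − e_j)` where `L⁺` is the Moore–Penrose pseudoinverse
of the Laplacian matrix of `G`. -/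
noncomputable def resDist {V : Type*} [Fintype V] [DecidableEq V] (G : SimpleGraph V)
    (i j : V) : ℝ :=
  letI : DecidableRel G.Adj := Classical.decRel _
  (Pi.single i 1 - Pi.single j 1) ⬝ᵥ
    (pinv (G.lapMatrix ℝ)) *ᵥ (Pi.single i 1 - Pi.single j 1)

lemma resDist_comm {V : Type*} [Fintype V] [DecidableEq V] (G : SimpleGraph V) (i j : V) :
    resDist G i j = resDist G j i := by
  unfold resDist
  rw [show (Pi.single j 1 - Pi.single i 1 : V → ℝ)
        = -(Pi.single i 1 - Pi.single j 1) by rw [neg_sub]]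
  rw [Matrix.mulVec_neg, dotProduct_neg, neg_dotProduct, neg_neg]

/-- The global cyclicity index `C(G) = Σ_{ij ∈ E(G)} (1/Ω_G(i,j) − 1)`,
the sum over all edges of `G`. -/
noncomputable def cyclicity {V : Type*} [Fintype V] [DecidableEq V] (G : SimpleGraph V) : ℝ :=
  letI : DecidableRel G.Adj := Classical.decRel _
  ∑ e ∈ G.edgeFinset,
    Sym2.lift ⟨fun i j => 1 / resDist G i j - 1,
      fun i j => by simp only []; rw [resDist_comm G i j]⟩ e

/-! ### Auxiliary material -/

set_option linter.unusedSectionVars false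

section CycAux

variable {V : Type*} [Fintype V] [DecidableEq V]

private lemma penrose_unique (A B C : Matrix V V ℝ)
    (hB1 : A * B * A = A) (hB2 : B * A * B = B)
    (hB3 : (A * B)ᵀ = A * B) (hB4 : (B * A)ᵀ = B * A)
    (hC1 : A * C * A = A) (hC2 : C * A * C = C)
    (hC3 : (A * C)ᵀ = A * C) (hC4 : (C * A)ᵀ = C * A) : B = C := by
  have hAB : A * B = A * C := by
    calc A * B = Bᵀ * Aᵀ := by rw [← transpose_mul, hB3]
    _ = Bᵀ * (A * C * A)ᵀ := by rw [hC1]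
    _ = Bᵀ * (Aᵀ * (A * C)ᵀ) := by rw [transpose_mul (A * C) A]
    _ = (Bᵀ * Aᵀ) * (A * C) := by rw [hC3, Matrix.mul_assoc]
    _ = (A * B) * (A * C) := by rw [← hB3, transpose_mul]
    _ = A * B * A * C := by noncomm_ring
    _ = A * C := by rw [hB1]
  have hBA : B * A = C * A := by
    calc B * A = Aᵀ * Bᵀ := by rw [← transpose_mul, hB4]
    _ = (A * C * A)ᵀ * Bᵀ := by rw [hC1]
    _ = (Aᵀ * (Cᵀ * Aᵀ)) * Bᵀ := by rw [transpose_mul (A * C) A, transpose_mul A C]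
    _ = (Aᵀ * Cᵀ) * (Aᵀ * Bᵀ) := by noncomm_ring
    _ = (C * A)ᵀ * (B * A)ᵀ := by rw [transpose_mul C A, transpose_mul B A]
    _ = (C * A) * (B * A) := by rw [hC4, hB4]
    _ = C * (A * B * A) := by noncomm_ring
    _ = C * A := by rw [hB1]
  calc B = B * A * B := hB2.symm
  _ = C * A * B := by rw [hBA]
  _ = C * (A * B) := by rw [Matrix.mul_assoc]
  _ = C * (A * C) := by rw [hAB]
  _ = C * A * C := by rw [Matrix.mul_assoc]
  _ = C := hC2

private lemma pinv_eq_of (A B : Matrix V V ℝ)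
    (h1 : A * B * A = A) (h2 : B * A * B = B)
    (h3 : (A * B)ᵀ = A * B) (h4 : (B * A)ᵀ = B * A) : pinv A = B := by
  have hex : ∃ C, A * C * A = A ∧ C * A * C = C ∧ (A * C)ᵀ = A * C ∧ (C * A)ᵀ = C * A :=
    ⟨B, h1, h2, h3, h4⟩
  have hp : pinv A = hex.choose := by
    unfold pinv
    rw [dif_pos hex]
  obtain ⟨c1, c2, c3, c4⟩ := hex.choose_spec
  rw [hp]
  exact penrose_unique A _ B c1 c2 c3 c4 h1 h2 h3 h4

/-- all-ones matrix -/
private noncomputable def ones (V : Type*) [Fintype V] : Matrix V V ℝ :=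
  Matrix.of fun _ _ => (1 : ℝ)

private lemma transpose_ones : (ones V)ᵀ = ones V := rfl

private lemma ones_mulVec (x : V → ℝ) : ones V *ᵥ x = fun _ => ∑ v, x v := by
  ext a; simp [ones, mulVec, dotProduct]

private lemma ones_mul_ones : ones V * ones V = (Fintype.card V : ℝ) • ones V := by
  ext a b; simp [ones, Matrix.mul_apply]

private lemma mul_vecMulVec (A : Matrix V V ℝ) (x y : V → ℝ) :
    A * vecMulVec x y = vecMulVec (A *ᵥ x) y := by
  ext a b
  simp [Matrix.mul_apply, vecMulVec_apply, mulVec, dotProduct, Finset.sum_mul, mul_assoc]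

private lemma vecMulVec_mul (A : Matrix V V ℝ) (x y : V → ℝ) :
    vecMulVec x y * A = vecMulVec x (Aᵀ *ᵥ y) := by
  ext a b
  simp only [Matrix.mul_apply, vecMulVec_apply, mulVec, dotProduct, transpose_apply,
    Finset.mul_sum]
  exact Finset.sum_congr rfl fun k _ => by ring

private lemma vecMulVec_mul_vecMulVec (x y z w : V → ℝ) :
    vecMulVec x y * vecMulVec z w = (y ⬝ᵥ z) • vecMulVec x w := by
  ext a b
  simp only [Matrix.mul_apply, vecMulVec_apply, dotProduct, Matrix.smul_apply, smul_eq_mul,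
    Finset.sum_mul]
  exact Finset.sum_congr rfl fun k _ => by ring

private lemma vecMulVec_mulVec (x y z : V → ℝ) :
    vecMulVec x y *ᵥ z = (y ⬝ᵥ z) • x := by
  ext a
  simp only [vecMulVec_apply, mulVec, dotProduct, Pi.smul_apply, smul_eq_mul, Finset.sum_mul]
  exact Finset.sum_congr rfl fun k _ => by ring

/-- Sherman-Morrison: right inverse version -/
private lemma sherman_morrison (K : Matrix V V ℝ) (M : Matrix V V ℝ) (u : V → ℝ)
    (hKM : K * M = 1) (hMs : Mᵀ = M)
    (hc : 1 + u ⬝ᵥ (M *ᵥ u) ≠ 0) :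
    (K + vecMulVec u u) * (M - (1 + u ⬝ᵥ (M *ᵥ u))⁻¹ • vecMulVec (M *ᵥ u) (M *ᵥ u)) = 1 := by
  set c : ℝ := u ⬝ᵥ (M *ᵥ u) with hcdef
  set s : ℝ := (1 + c)⁻¹ with hs
  set v : V → ℝ := M *ᵥ u with hv
  set W : Matrix V V ℝ := vecMulVec u v with hW
  have e1 : K * vecMulVec v v = W := by
    rw [_root_.mul_vecMulVec, hv, Matrix.mulVec_mulVec, hKM, Matrix.one_mulVec]
  have e2 : vecMulVec u u * M = W := by
    rw [_root_.vecMulVec_mul, hMs]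
  have e3 : vecMulVec u u * vecMulVec v v = c • W := by
    rw [_root_.vecMulVec_mul_vecMulVec, hcdef, dotProduct_comm]
  calc (K + vecMulVec u u) * (M - s • vecMulVec v v)
      = K * M - s • (K * vecMulVec v v) +
        (vecMulVec u u * M - s • (vecMulVec u u * vecMulVec v v)) := by
        rw [Matrix.add_mul, Matrix.mul_sub, Matrix.mul_sub, Matrix.mul_smul, Matrix.mul_smul]
    _ = 1 - s • W + (W - (s * c) • W) := by rw [hKM, e1, e2, e3, smul_smul]
    _ = 1 + ((1 - s * c - s) • W) := by rw [sub_smul, sub_smul, one_smul]; abel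
    _ = 1 := by
        have hz : (1 : ℝ) - s * c - s = 0 := by rw [hs]; field_simp; ring
        rw [hz, zero_smul, add_zero]

private lemma lapMatrix_irrel (H : SimpleGraph V) (d1 d2 : DecidableRel H.Adj) :
    @SimpleGraph.lapMatrix V ℝ _ H d1 _ _ = @SimpleGraph.lapMatrix V ℝ _ H d2 _ _ := by
  congr!

private lemma dp_entries (M : Matrix V V ℝ) (a b c d : V) :
    (Pi.single a 1 - Pi.single b 1) ⬝ᵥ (M *ᵥ (Pi.single c 1 - Pi.single d 1))
      = M a c - M a d - M b c + M b d := by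
  simp [Matrix.mulVec_sub, sub_dotProduct, dotProduct_sub,
    single_dotProduct, Matrix.mulVec_single]
  ring

section Graph

variable (H : SimpleGraph V) [inst : DecidableRel H.Adj]

private lemma lap_mul_ones : H.lapMatrix ℝ * ones V = 0 := by
  ext a b
  have h0 := congrFun (H.lapMatrix_mulVec_const_eq_zero (R := ℝ)) a
  simpa [Matrix.mul_apply, ones, mulVec, dotProduct] using h0

private lemma ones_mul_lap : ones V * H.lapMatrix ℝ = 0 := by
  have h : (H.lapMatrix ℝ * ones V)ᵀ = 0 := by rw [lap_mul_ones]; simp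
  rw [transpose_mul, transpose_ones, (H.isSymm_lapMatrix ℝ).eq] at h
  exact h

/-- the regularized matrix K = L + J/n -/
private noncomputable def gK : Matrix V V ℝ :=
  H.lapMatrix ℝ + (Fintype.card V : ℝ)⁻¹ • ones V

private lemma gK_symm : (gK H)ᵀ = gK H := by
  unfold gK
  rw [transpose_add, transpose_smul, transpose_ones, (H.isSymm_lapMatrix ℝ).eq]

variable (hH : H.Connected)
include hH

private lemma cardV_pos : 0 < (Fintype.card V : ℝ) := by
  have : Nonempty V := hH.nonempty
  exact_mod_cast Fintype.card_pos

private lemma posDef_gK : (gK H).PosDef := by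
  rw [posDef_iff_dotProduct_mulVec]
  constructor
  · rw [IsHermitian, conjTranspose_eq_transpose_of_trivial, gK_symm]
  · intro x hx
    rw [star_trivial]
    have hsplit : x ⬝ᵥ (gK H *ᵥ x) =
        x ⬝ᵥ (H.lapMatrix ℝ *ᵥ x) + (Fintype.card V : ℝ)⁻¹ * (∑ v, x v) ^ 2 := by
      unfold gK
      rw [add_mulVec, dotProduct_add, smul_mulVec, dotProduct_smul, ones_mulVec]
      have hdp : x ⬝ᵥ (fun _ => ∑ v, x v) = (∑ v, x v) ^ 2 := by
        simp [dotProduct, ← Finset.sum_mul, sq]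
      rw [hdp, smul_eq_mul]
    have hL : 0 ≤ x ⬝ᵥ (H.lapMatrix ℝ *ᵥ x) := by
      have h := (SimpleGraph.posSemidef_lapMatrix ℝ H).dotProduct_mulVec_nonneg x
      rwa [star_trivial] at h
    rcases eq_or_lt_of_le hL with hL0 | hLpos
    · have hconst : ∀ a b : V, H.Reachable a b → x a = x b := by
        rw [← SimpleGraph.lapMatrix_toLinearMap₂'_apply'_eq_zero_iff_forall_reachable]
        rw [Matrix.toLinearMap₂'_apply']
        exact hL0.symm
      obtain ⟨v0⟩ := hH.nonempty
      have hxc : ∀ a, x a = x v0 := fun a => hconst a v0 (hH.preconnected a v0)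
      have hxv0 : x v0 ≠ 0 := by
        intro h0
        apply hx
        funext a; rw [hxc a, h0]; rfl
      have hsum : ∑ v, x v = (Fintype.card V : ℝ) * x v0 := by
        rw [Finset.sum_congr rfl (fun a _ => hxc a)]
        simp [Finset.sum_const, mul_comm]
      rw [hsplit, ← hL0, zero_add, hsum]
      have hn := cardV_pos H hH
      positivity
    · rw [hsplit]
      have h2 : 0 ≤ (Fintype.card V : ℝ)⁻¹ * (∑ v, x v) ^ 2 := by positivity
      linarith

private lemma isUnit_gK_det : IsUnit (gK H).det :=
  isUnit_iff_ne_zero.mpr (ne_of_gt (posDef_gK H hH).det_pos)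

private lemma gK_mul_inv : gK H * (gK H)⁻¹ = 1 := Matrix.mul_nonsing_inv _ (isUnit_gK_det H hH)

private lemma gK_inv_mul : (gK H)⁻¹ * gK H = 1 := Matrix.nonsing_inv_mul _ (isUnit_gK_det H hH)

private lemma gK_inv_symm : ((gK H)⁻¹)ᵀ = (gK H)⁻¹ := by
  rw [transpose_nonsing_inv, gK_symm]

private lemma gK_mul_ones : gK H * ones V = ones V := by
  unfold gK
  rw [add_mul, lap_mul_ones, smul_mul, ones_mul_ones, zero_add, smul_smul,
    inv_mul_cancel₀ (ne_of_gt (cardV_pos H hH)), one_smul]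

private lemma ones_mul_gK : ones V * gK H = ones V := by
  unfold gK
  rw [mul_add, ones_mul_lap, Matrix.mul_smul, ones_mul_ones, zero_add, smul_smul,
    inv_mul_cancel₀ (ne_of_gt (cardV_pos H hH)), one_smul]

private lemma gKinv_mul_ones : (gK H)⁻¹ * ones V = ones V := by
  conv_lhs => rw [← gK_mul_ones H hH, ← Matrix.mul_assoc, gK_inv_mul H hH, Matrix.one_mul]

private lemma ones_mul_gKinv : ones V * (gK H)⁻¹ = ones V := by
  conv_lhs => rw [← ones_mul_gK H hH, Matrix.mul_assoc, gK_mul_inv H hH, Matrix.mul_one]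

private lemma pinv_lapMatrix :
    pinv (H.lapMatrix ℝ) = (gK H)⁻¹ - (Fintype.card V : ℝ)⁻¹ • ones V := by
  set n : ℝ := (Fintype.card V : ℝ) with hn
  set L := H.lapMatrix ℝ with hL
  set M := (gK H)⁻¹ with hM
  have hLK : L = gK H - n⁻¹ • ones V := by unfold gK; rw [← hL, ← hn]; abel
  have hLM : L * M = 1 - n⁻¹ • ones V := by
    rw [hLK, Matrix.sub_mul, gK_mul_inv H hH, Matrix.smul_mul, ones_mul_gKinv H hH]
  have hML : M * L = 1 - n⁻¹ • ones V := by
    rw [hLK, Matrix.mul_sub, gK_inv_mul H hH, Matrix.mul_smul, gKinv_mul_ones H hH]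
  set B := M - n⁻¹ • ones V with hB
  have hLB : L * B = 1 - n⁻¹ • ones V := by
    rw [hB, Matrix.mul_sub, hLM, Matrix.mul_smul, lap_mul_ones, smul_zero, sub_zero]
  have hBL : B * L = 1 - n⁻¹ • ones V := by
    rw [hB, Matrix.sub_mul, hML, Matrix.smul_mul, ones_mul_lap, smul_zero, sub_zero]
  apply pinv_eq_of
  · rw [hLB, Matrix.sub_mul, Matrix.one_mul, Matrix.smul_mul, ones_mul_lap, smul_zero, sub_zero]
  · rw [hBL, Matrix.sub_mul, Matrix.one_mul, Matrix.smul_mul]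
    have honesB : ones V * B = 0 := by
      rw [hB, Matrix.mul_sub, ones_mul_gKinv H hH, Matrix.mul_smul, ones_mul_ones, smul_smul,
        inv_mul_cancel₀ (ne_of_gt (cardV_pos H hH)), one_smul, sub_self]
    rw [honesB, smul_zero, sub_zero]
  · rw [hLB, transpose_sub, transpose_one, transpose_smul, transpose_ones]
  · rw [hBL, transpose_sub, transpose_one, transpose_smul, transpose_ones]

private lemma resDist_eq_inv (p q : V) :
    resDist H p q = (Pi.single p 1 - Pi.single q 1) ⬝ᵥ
      ((gK H)⁻¹ *ᵥ (Pi.single p 1 - Pi.single q 1)) := by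
  unfold resDist
  rw [lapMatrix_irrel H (Classical.decRel _) inst, pinv_lapMatrix H hH]
  rw [Matrix.sub_mulVec, smul_mulVec, ones_mulVec]
  have hs : (∑ v, (Pi.single p 1 - Pi.single q 1 : V → ℝ) v) = 0 := by
    simp [Pi.single_apply, Finset.sum_sub_distrib]
  rw [hs]
  have hz : ((Fintype.card V : ℝ)⁻¹ • (fun _ => (0:ℝ) : V → ℝ)) = 0 := by
    funext a; simp
  rw [hz, sub_zero]

private lemma posDef_gKinv : ((gK H)⁻¹).PosDef := (posDef_gK H hH).inv

omit hH in
private lemma single_sub_ne_zero {p q : V} (hpq : p ≠ q) :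
    (Pi.single p 1 - Pi.single q 1 : V → ℝ) ≠ 0 := by
  intro h
  have h2 := congrFun h p
  simp [Pi.single_apply, hpq, Ne.symm hpq] at h2

private lemma resDist_pos {p q : V} (hpq : p ≠ q) : 0 < resDist H p q := by
  rw [resDist_eq_inv H hH]
  have h := (posDef_gKinv H hH).dotProduct_mulVec_pos (single_sub_ne_zero hpq)
  rwa [star_trivial] at h

end Graph

private lemma lap_add_edge (G G' : SimpleGraph V) [DecidableRel G.Adj] [DecidableRel G'.Adj]
    (i j : V) (hij : i ≠ j) (hadj : ¬ G.Adj i j)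
    (hAdj' : ∀ a b : V, G'.Adj a b ↔ G.Adj a b ∨ s(a, b) = s(i, j)) :
    G'.lapMatrix ℝ
      = G.lapMatrix ℝ + vecMulVec (Pi.single i 1 - Pi.single j 1)
          (Pi.single i 1 - Pi.single j 1) := by
  set u : V → ℝ := Pi.single i 1 - Pi.single j 1 with hu
  have hu_app : ∀ a, u a = (if a = i then (1:ℝ) else 0) - (if a = j then 1 else 0) := by
    intro a; simp [hu, Pi.single_apply]
  have hpair : ∀ a b : V, s(a, b) = s(i, j) ↔ (a = i ∧ b = j) ∨ (a = j ∧ b = i) :=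
    fun a b => Sym2.eq_iff
  have hdisj : ∀ a b : V, s(a, b) = s(i, j) → ¬ G.Adj a b := by
    intro a b h
    rcases (hpair a b).mp h with ⟨rfl, rfl⟩ | ⟨rfl, rfl⟩
    · exact hadj
    · exact fun h' => hadj h'.symm
  have hsplit : ∀ a b : V, (if G'.Adj a b then (1:ℝ) else 0)
      = (if G.Adj a b then 1 else 0) + (if s(a, b) = s(i, j) then 1 else 0) := by
    intro a b
    by_cases h2 : s(a, b) = s(i, j)
    · simp [hAdj', h2, hdisj a b h2]
    · by_cases h1 : G.Adj a b <;> simp [hAdj', h1, h2]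
  ext a b
  simp only [SimpleGraph.lapMatrix, SimpleGraph.degMatrix, Matrix.sub_apply, Matrix.add_apply,
    Matrix.diagonal_apply, SimpleGraph.adjMatrix_apply, vecMulVec_apply]
  by_cases hab : a = b
  · subst hab
    rw [if_pos rfl, if_pos rfl]
    have h1 : ((G'.degree a : ℕ) : ℝ) = ∑ k, if G'.Adj a k then (1:ℝ) else 0 :=
      SimpleGraph.degree_eq_sum_if_adj G' a
    have h2 : ((G.degree a : ℕ) : ℝ) = ∑ k, if G.Adj a k then (1:ℝ) else 0 :=
      SimpleGraph.degree_eq_sum_if_adj G a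
    rw [h1, h2]
    have h3 : (∑ k, if G'.Adj a k then (1:ℝ) else 0)
        = (∑ k, if G.Adj a k then (1:ℝ) else 0) + ∑ k, if s(a, k) = s(i, j) then (1:ℝ) else 0 := by
      rw [← Finset.sum_add_distrib]
      exact Finset.sum_congr rfl fun k _ => hsplit a k
    rw [h3]
    have h4 : (∑ k, if s(a, k) = s(i, j) then (1:ℝ) else 0) = u a * u a := by
      by_cases hai : a = i
      · subst hai
        have hiff : ∀ k, (s(a, k) = s(a, j)) ↔ k = j := by
          intro k
          rw [hpair]
          constructor
          · rintro (⟨-, rfl⟩ | ⟨h, -⟩)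
            · rfl
            · exact absurd h hij
          · rintro rfl; exact Or.inl ⟨rfl, rfl⟩
        simp only [hiff, hu_app, if_pos rfl, if_neg hij]
        rw [Finset.sum_ite_eq' univ j (fun _ => (1:ℝ))]
        simp
      · by_cases haj : a = j
        · subst haj
          have hiff : ∀ k, (s(a, k) = s(i, a)) ↔ k = i := by
            intro k
            rw [hpair]
            constructor
            · rintro (⟨h, -⟩ | ⟨-, rfl⟩)
              · exact absurd h hai
              · rfl
            · rintro rfl; exact Or.inr ⟨rfl, rfl⟩
          simp only [hiff, hu_app, if_pos rfl, if_neg hai]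
          rw [Finset.sum_ite_eq' univ i (fun _ => (1:ℝ))]
          simp
        · have hnone : ∀ k, ¬ (s(a, k) = s(i, j)) := by
            intro k h
            rcases (hpair a k).mp h with ⟨h1', -⟩ | ⟨h1', -⟩
            · exact hai h1'
            · exact haj h1'
          simp [hnone, hu_app, hai, haj]
    rw [h4]
    have h5 : ¬ G'.Adj a a := G'.irrefl
    have h6 : ¬ G.Adj a a := G.irrefl
    simp only [if_neg h5, if_neg h6]
    ring
  · rw [if_neg hab, if_neg hab, hsplit a b]
    have h7 : (if s(a, b) = s(i, j) then (1:ℝ) else 0) = -(u a * u b) := by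
      simp only [hu_app]
      by_cases hai : a = i <;> by_cases haj : a = j <;>
        by_cases hbi : b = i <;> by_cases hbj : b = j <;>
        simp_all [hpair]
    rw [h7]
    ring

private lemma cyclicity_eq_sum (H : SimpleGraph V) (s : Finset (Sym2 V))
    (hs : ∀ e, e ∈ s ↔ e ∈ H.edgeSet) :
    cyclicity H = ∑ e ∈ s,
      Sym2.lift ⟨fun a b => 1 / resDist H a b - 1,
        fun a b => by simp only []; rw [resDist_comm H a b]⟩ e := by
  letI : DecidableRel H.Adj := Classical.decRel _
  unfold cyclicity
  apply Finset.sum_congr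
  · apply Finset.ext
    intro e
    rw [SimpleGraph.mem_edgeFinset, hs]
  · intros; rfl

end CycAux

set_option maxHeartbeats 2000000 in
theorem stmt1 {V : Type*} [Fintype V] [DecidableEq V] (G : SimpleGraph V) [DecidableRel G.Adj]
    (hG : G.Connected) (i j : V) (hij : i ≠ j) (hadj : ¬ G.Adj i j)
    (G' : SimpleGraph V) (hG' : G' = G ⊔ SimpleGraph.fromEdgeSet {s(i, j)}) :
    cyclicity G' - cyclicity G = 1 / resDist G i j +
      ∑ e ∈ G.edgeFinset, Sym2.lift ⟨fun p q =>
        (resDist G p i + resDist G q j - resDist G p j - resDist G q i) ^ 2 /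
          (4 * (resDist G p q) ^ 2 * (1 + resDist G i j) - resDist G p q *
            (resDist G p i + resDist G q j - resDist G p j - resDist G q i) ^ 2),
        fun p q => by simp only []; rw [resDist_comm G q p]; ring⟩ e := by
  letI dG' : DecidableRel G'.Adj := Classical.decRel _
  have hpair : ∀ a b : V, s(a, b) = s(i, j) ↔ (a = i ∧ b = j) ∨ (a = j ∧ b = i) :=
    fun a b => Sym2.eq_iff
  have hAdj' : ∀ a b : V, G'.Adj a b ↔ G.Adj a b ∨ s(a, b) = s(i, j) := by
    intro a b
    have hne : s(a, b) = s(i, j) → a ≠ b := by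
      intro h
      rcases (hpair a b).mp h with ⟨rfl, rfl⟩ | ⟨rfl, rfl⟩
      · exact hij
      · exact hij.symm
    rw [hG', SimpleGraph.sup_adj, SimpleGraph.fromEdgeSet_adj, Set.mem_singleton_iff]
    tauto
  have hG'conn : G'.Connected := by
    rw [hG']; exact hG.mono le_sup_left
  set u : V → ℝ := Pi.single i 1 - Pi.single j 1 with hu
  set M : Matrix V V ℝ := (gK G)⁻¹ with hM
  set c : ℝ := u ⬝ᵥ (M *ᵥ u) with hc
  have hcres : resDist G i j = c := resDist_eq_inv G hG i j
  have hcpos : 0 < c := by rw [← hcres]; exact resDist_pos G hG hij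
  have h1c : (0:ℝ) < 1 + c := by linarith
  have h1cne : (1:ℝ) + c ≠ 0 := ne_of_gt h1c
  have hK' : gK G' = gK G + vecMulVec u u := by
    unfold gK
    rw [lap_add_edge G G' i j hij hadj hAdj', ← hu]
    abel
  have hMs : Mᵀ = M := gK_inv_symm G hG
  have hinv' : (gK G')⁻¹ = M - (1 + c)⁻¹ • vecMulVec (M *ᵥ u) (M *ᵥ u) := by
    apply Matrix.inv_eq_right_inv
    rw [hK']
    exact sherman_morrison (gK G) M u (gK_mul_inv G hG) hMs (by rw [← hc]; exact h1cne)
  have hres' : ∀ p q : V, resDist G' p q = resDist G p q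
      - (1 + c)⁻¹ * ((Pi.single p 1 - Pi.single q 1) ⬝ᵥ (M *ᵥ u)) ^ 2 := by
    intro p q
    rw [resDist_eq_inv G' hG'conn p q, hinv', resDist_eq_inv G hG p q]
    rw [Matrix.sub_mulVec, dotProduct_sub]
    congr 1
    simp only [smul_mulVec, _root_.vecMulVec_mulVec, dotProduct_smul, smul_eq_mul]
    rw [dotProduct_comm (M *ᵥ u) (Pi.single p 1 - Pi.single q 1)]
    ring
  have hsym : ∀ x y, M x y = M y x := by
    intro x y
    conv_lhs => rw [← hMs]
    rw [transpose_apply]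
  have hbracket : ∀ p q : V,
      resDist G p i + resDist G q j - resDist G p j - resDist G q i
        = -2 * ((Pi.single p 1 - Pi.single q 1) ⬝ᵥ (M *ᵥ u)) := by
    intro p q
    rw [resDist_eq_inv G hG p i, resDist_eq_inv G hG q j, resDist_eq_inv G hG p j,
      resDist_eq_inv G hG q i, hu]
    rw [dp_entries, dp_entries, dp_entries, dp_entries]
    rw [sub_dotProduct, single_dotProduct, single_dotProduct,
      Matrix.mulVec_sub, Matrix.mulVec_single, Matrix.mulVec_single]
    simp only [Pi.sub_apply, one_mul, mul_one, MulOpposite.op_one, one_smul, Matrix.col_apply]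
    linear_combination hsym p i - hsym p j - hsym q i + hsym q j
  have hterm : ∀ p q : V, p ≠ q →
      (1 / resDist G' p q - 1) - (1 / resDist G p q - 1)
        = (resDist G p i + resDist G q j - resDist G p j - resDist G q i) ^ 2 /
          (4 * (resDist G p q) ^ 2 * (1 + resDist G i j) - resDist G p q *
            (resDist G p i + resDist G q j - resDist G p j - resDist G q i) ^ 2) := by
    intro p q hpq
    have hΩpos : 0 < resDist G p q := resDist_pos G hG hpq
    have hΩ'pos : 0 < resDist G' p q := resDist_pos G' hG'conn hpq
    have hΩ'' : 0 < resDist G p q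
        - (1 + c)⁻¹ * ((Pi.single p 1 - Pi.single q 1) ⬝ᵥ (M *ᵥ u)) ^ 2 := by
      rw [← hres' p q]; exact hΩ'pos
    rw [hbracket p q, hcres, hres' p q]
    set b : ℝ := (Pi.single p 1 - Pi.single q 1) ⬝ᵥ (M *ᵥ u) with hb
    set Ω : ℝ := resDist G p q with hΩ
    have h1 : Ω ≠ 0 := ne_of_gt hΩpos
    have h2 : Ω - (1 + c)⁻¹ * b ^ 2 ≠ 0 := ne_of_gt hΩ''
    have hrepl : Ω - (1 + c)⁻¹ * b ^ 2 = (Ω + c * Ω - b ^ 2) / (1 + c) := by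
      field_simp
    have h3 : Ω + c * Ω - b ^ 2 ≠ 0 := by
      have hx : Ω + c * Ω - b ^ 2 = (1 + c) * (Ω - (1 + c)⁻¹ * b ^ 2) := by
        field_simp
      rw [hx]
      exact mul_ne_zero h1cne h2
    have hden : 4 * Ω ^ 2 * (1 + c) - Ω * (-2 * b) ^ 2
        = (4 * Ω * (1 + c)) * (Ω - (1 + c)⁻¹ * b ^ 2) := by
      field_simp
      ring
    rw [hden, hrepl]
    rw [one_div_div]
    field_simp
    linear_combination 4 * mul_inv_cancel₀ (show Ω + Ω * c - b ^ 2 ≠ 0 by rwa [mul_comm Ω c])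
  have hnotmem : s(i, j) ∉ G.edgeFinset := by
    rw [SimpleGraph.mem_edgeFinset, SimpleGraph.mem_edgeSet]; exact hadj
  have hE : cyclicity G = ∑ e ∈ G.edgeFinset,
      Sym2.lift ⟨fun a b => 1 / resDist G a b - 1,
        fun a b => by simp only []; rw [resDist_comm G a b]⟩ e :=
    cyclicity_eq_sum G G.edgeFinset (fun e => SimpleGraph.mem_edgeFinset)
  have hE' : cyclicity G' = ∑ e ∈ insert s(i, j) G.edgeFinset,
      Sym2.lift ⟨fun a b => 1 / resDist G' a b - 1,
        fun a b => by simp only []; rw [resDist_comm G' a b]⟩ e := by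
    apply cyclicity_eq_sum G'
    intro e
    induction e using Sym2.ind with
    | _ a b =>
      rw [Finset.mem_insert, SimpleGraph.mem_edgeFinset, SimpleGraph.mem_edgeSet,
        SimpleGraph.mem_edgeSet, hAdj']
      tauto
  rw [hE', hE, Finset.sum_insert hnotmem]
  have hij_term : 1 / resDist G' i j - 1 = 1 / resDist G i j := by
    rw [hres' i j, ← hu, ← hc, hcres]
    have hcc : c - (1 + c)⁻¹ * c ^ 2 = c / (1 + c) := by field_simp; ring
    rw [hcc, one_div_div]
    field_simp
    ring
  have hliftij : Sym2.lift ⟨fun a b => 1 / resDist G' a b - 1,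
      fun a b => by simp only []; rw [resDist_comm G' a b]⟩ s(i, j)
        = 1 / resDist G i j := by
    rw [Sym2.lift_mk]
    exact hij_term
  rw [hliftij, add_sub_assoc, ← Finset.sum_sub_distrib]
  congr 1
  apply Finset.sum_congr rfl
  intro e he
  revert he
  induction e using Sym2.ind with
  | _ p q =>
    intro he
    rw [SimpleGraph.mem_edgeFinset, SimpleGraph.mem_edgeSet] at he
    rw [Sym2.lift_mk, Sym2.lift_mk, Sym2.lift_mk]
    exact hterm p q he.ne
end

section
/- (Strictly monotone increasing property) Let G be a finite connected simple graph and let H be a connected spanning subgraph of G with H ≠ G. Then C(H) < C(G). -/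
open Matrix Finset

/-! ### Auxiliary material: Moore–Penrose pseudoinverse -/

def IsMP {n : Type*} [Fintype n] [DecidableEq n] (A B : Matrix n n ℝ) : Prop :=
  A * B * A = A ∧ B * A * B = B ∧ (A * B)ᵀ = A * B ∧ (B * A)ᵀ = B * A

lemma isMP_unique {n : Type*} [Fintype n] [DecidableEq n] {A B C : Matrix n n ℝ}
    (hB : IsMP A B) (hC : IsMP A C) : B = C := by
  obtain ⟨hB1, hB2, hB3, hB4⟩ := hB
  obtain ⟨hC1, hC2, hC3, hC4⟩ := hC
  have hAt : Aᵀ = Aᵀ * A * C := by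
    conv_lhs => rw [← hC1]
    rw [Matrix.transpose_mul, hC3]
    noncomm_ring
  have hBB : B * Bᵀ * Aᵀ = B := by
    have h : Bᵀ * Aᵀ = A * B := by rw [← Matrix.transpose_mul, hB3]
    calc B * Bᵀ * Aᵀ = B * (Bᵀ * Aᵀ) := by noncomm_ring
    _ = B * (A * B) := by rw [h]
    _ = B := by rw [← Matrix.mul_assoc, hB2]
  have h1 : B = B * A * C := by
    calc B = B * Bᵀ * Aᵀ := hBB.symm
    _ = B * Bᵀ * (Aᵀ * A * C) := by rw [← hAt]
    _ = (B * Bᵀ * Aᵀ) * (A * C) := by noncomm_ring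
    _ = B * (A * C) := by rw [hBB]
    _ = B * A * C := by noncomm_ring
  have hAt2 : Aᵀ = B * A * Aᵀ := by
    conv_lhs => rw [← hB1]
    rw [show (A * B * A)ᵀ = (B * A)ᵀ * Aᵀ by rw [← Matrix.transpose_mul]; noncomm_ring, hB4]
  have hCC : Aᵀ * Cᵀ * C = C := by
    have h : Aᵀ * Cᵀ = C * A := by rw [← Matrix.transpose_mul, hC4]
    rw [h, Matrix.mul_assoc] at *
    exact hC2
  have h2 : C = B * A * C := by
    calc C = Aᵀ * Cᵀ * C := hCC.symm
    _ = (B * A * Aᵀ) * Cᵀ * C := by rw [← hAt2]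
    _ = (B * A) * (Aᵀ * Cᵀ * C) := by noncomm_ring
    _ = B * A * C := by rw [hCC]
  rw [h1, ← h2]

lemma pinv_eq_of_isMP {n : Type*} [Fintype n] [DecidableEq n] {A B : Matrix n n ℝ}
    (hB : IsMP A B) : pinv A = B := by
  have h : ∃ C, A * C * A = A ∧ C * A * C = C ∧ (A * C)ᵀ = A * C ∧ (C * A)ᵀ = C * A := ⟨B, hB⟩
  rw [pinv, dif_pos h]
  exact isMP_unique h.choose_spec hB

/-! ### The Dirichlet energy of a graph -/

section Graph

variable {V : Type*} [Fintype V] [DecidableEq V]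

noncomputable def Egy (G : SimpleGraph V) [DecidableRel G.Adj] (f : V → ℝ) : ℝ :=
  f ⬝ᵥ (G.lapMatrix ℝ *ᵥ f)

lemma Egy_eq (G : SimpleGraph V) [DecidableRel G.Adj] (f : V → ℝ) :
    Egy G f = (∑ i, ∑ j, if G.Adj i j then (f i - f j)^2 else 0)/2 := by
  rw [Egy, ← Matrix.toLinearMap₂'_apply', SimpleGraph.lapMatrix_toLinearMap₂']

lemma Egy_nonneg (G : SimpleGraph V) [DecidableRel G.Adj] (f : V → ℝ) : 0 ≤ Egy G f := by
  rw [Egy_eq]; positivity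

lemma Egy_mono {G H : SimpleGraph V} [DecidableRel G.Adj] [DecidableRel H.Adj]
    (hle : H ≤ G) (f : V → ℝ) : Egy H f ≤ Egy G f := by
  rw [Egy_eq, Egy_eq]
  gcongr ?_ / 2
  · apply Finset.sum_le_sum; intro i _
    apply Finset.sum_le_sum; intro j _
    by_cases h : H.Adj i j
    · rw [if_pos h, if_pos (hle h)]
    · rw [if_neg h]; positivity

lemma Egy_ge_two {G : SimpleGraph V} [DecidableRel G.Adj] {a b u v : V}
    (hab : G.Adj a b) (huv : G.Adj u v) (hne : ¬(s(a,b) = s(u,v))) (f : V → ℝ) :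
    (f a - f b)^2 + (f u - f v)^2 ≤ Egy G f := by
  rw [Egy_eq]
  rw [show (∑ i : V, ∑ j : V, if G.Adj i j then (f i - f j)^2 else 0)
      = ∑ p : V × V, (if G.Adj p.1 p.2 then (f p.1 - f p.2)^2 else 0) by
    rw [Fintype.sum_prod_type]]
  rw [Sym2.eq_iff] at hne
  push_neg at hne
  obtain ⟨h1, h2⟩ := hne
  have hab' := hab.ne
  have huv' := huv.ne
  set t : V × V → ℝ := fun p => if G.Adj p.1 p.2 then (f p.1 - f p.2)^2 else 0 with ht
  have hS : ∑ p ∈ ({(a,b),(b,a),(u,v),(v,u)} : Finset (V × V)), t p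
      = 2*(f a - f b)^2 + 2*(f u - f v)^2 := by
    rw [Finset.sum_insert, Finset.sum_insert, Finset.sum_insert, Finset.sum_singleton]
    · simp only [ht, if_pos hab, if_pos huv, if_pos hab.symm, if_pos huv.symm]
      ring
    · simp only [Finset.mem_singleton, Prod.ext_iff]
      tauto
    · simp only [Finset.mem_insert, Finset.mem_singleton, Prod.ext_iff]
      push_neg
      refine ⟨?_, ?_⟩ <;> tauto
    · simp only [Finset.mem_insert, Finset.mem_singleton, Prod.ext_iff]
      push_neg
      refine ⟨?_, ?_, ?_⟩ <;> tauto
  have hsub : ∑ p ∈ ({(a,b),(b,a),(u,v),(v,u)} : Finset (V × V)), t p ≤ ∑ p ∈ Finset.univ, t p := by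
    apply Finset.sum_le_sum_of_subset_of_nonneg (Finset.subset_univ _)
    intro p _ _
    simp only [ht]
    positivity
  rw [hS] at hsub
  linarith

lemma Egy_ge_one {G : SimpleGraph V} [DecidableRel G.Adj] {a b : V}
    (hab : G.Adj a b) (f : V → ℝ) : (f a - f b)^2 ≤ Egy G f := by
  rw [Egy_eq]
  rw [show (∑ i : V, ∑ j : V, if G.Adj i j then (f i - f j)^2 else 0)
      = ∑ p : V × V, (if G.Adj p.1 p.2 then (f p.1 - f p.2)^2 else 0) by
    rw [Fintype.sum_prod_type]]
  set t : V × V → ℝ := fun p => if G.Adj p.1 p.2 then (f p.1 - f p.2)^2 else 0 with ht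
  have hS : ∑ p ∈ ({(a,b),(b,a)} : Finset (V × V)), t p = 2*(f a - f b)^2 := by
    rw [Finset.sum_insert, Finset.sum_singleton]
    · simp only [ht, if_pos hab, if_pos hab.symm]; ring
    · simp only [Finset.mem_singleton, Prod.ext_iff]
      have := hab.ne; tauto
  have hsub : ∑ p ∈ ({(a,b),(b,a)} : Finset (V × V)), t p ≤ ∑ p ∈ Finset.univ, t p := by
    apply Finset.sum_le_sum_of_subset_of_nonneg (Finset.subset_univ _)
    intro p _ _
    simp only [ht]
    positivity
  rw [hS] at hsub
  linarith

/-! ### The pseudoinverse of the Laplacian of a connected graph -/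

noncomputable def Jmat (V : Type*) [Fintype V] : Matrix V V ℝ :=
  Matrix.of fun _ _ => (Fintype.card V : ℝ)⁻¹

variable [Nonempty V]

lemma card_ne : (Fintype.card V : ℝ) ≠ 0 := by
  simp [Fintype.card_ne_zero]

lemma Jmat_mul_Jmat : Jmat V * Jmat V = Jmat V := by
  ext i j
  simp only [Jmat, Matrix.mul_apply, Matrix.of_apply]
  rw [Finset.sum_const, Finset.card_univ, nsmul_eq_mul]
  field_simp

lemma Jmat_transpose : (Jmat V)ᵀ = Jmat V := rfl

lemma Jmat_mulVec (f : V → ℝ) : Jmat V *ᵥ f = fun _ => (∑ k, f k) / Fintype.card V := by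
  ext i
  simp [Jmat, Matrix.mulVec, dotProduct, Finset.sum_div, div_eq_inv_mul, Finset.mul_sum]

variable (G : SimpleGraph V) [DecidableRel G.Adj]

lemma lap_mul_Jmat : G.lapMatrix ℝ * Jmat V = 0 := by
  ext i j
  have h := congrFun (G.lapMatrix_mulVec_const_eq_zero (R := ℝ)) i
  simp only [Matrix.mulVec, dotProduct, mul_one, Pi.zero_apply] at h
  simp only [Matrix.mul_apply, Jmat, Matrix.of_apply, Matrix.zero_apply, ← Finset.sum_mul, h,
    zero_mul]

lemma Jmat_mul_lap : Jmat V * G.lapMatrix ℝ = 0 := by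
  have := congrArg Matrix.transpose (lap_mul_Jmat G)
  rwa [Matrix.transpose_mul, Jmat_transpose, (G.isSymm_lapMatrix (R := ℝ)).eq, Matrix.transpose_zero] at this

lemma dot_Jmat (f : V → ℝ) : f ⬝ᵥ (Jmat V *ᵥ f) = (∑ k, f k)^2 / Fintype.card V := by
  rw [Jmat_mulVec]
  simp only [dotProduct]
  rw [← Finset.sum_mul, sq]
  ring

lemma Mmat_det_ne_zero (hG : G.Connected) : (G.lapMatrix ℝ + Jmat V).det ≠ 0 := by
  intro hdet
  obtain ⟨v, hv, hv0⟩ := (Matrix.exists_mulVec_eq_zero_iff).mpr hdet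
  have hq : v ⬝ᵥ ((G.lapMatrix ℝ + Jmat V) *ᵥ v) = 0 := by rw [hv0, dotProduct_zero]
  rw [Matrix.add_mulVec, dotProduct_add, dot_Jmat] at hq
  have h1 : 0 ≤ v ⬝ᵥ (G.lapMatrix ℝ *ᵥ v) := by
    rw [← Matrix.toLinearMap₂'_apply', SimpleGraph.lapMatrix_toLinearMap₂']
    positivity
  have h2 : 0 ≤ (∑ k, v k)^2 / Fintype.card V := by positivity
  have hE : v ⬝ᵥ (G.lapMatrix ℝ *ᵥ v) = 0 := by linarith
  have hsum : (∑ k, v k) = 0 := by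
    have : (∑ k, v k)^2 / Fintype.card V = 0 := by linarith
    have hc := card_ne (V := V)
    field_simp at this
    simpa using this
  have hconst : ∀ i j : V, v i = v j := by
    rw [← Matrix.toLinearMap₂'_apply'] at hE
    intro i j
    exact (SimpleGraph.lapMatrix_toLinearMap₂'_apply'_eq_zero_iff_forall_reachable G v).mp hE i j
      (hG.preconnected i j)
  apply hv
  obtain ⟨i⟩ := ‹Nonempty V›
  have : ∀ j, v j = v i := fun j => hconst j i
  have hvi : (Fintype.card V : ℝ) * v i = 0 := by
    rw [← hsum]
    rw [Finset.sum_congr rfl (fun j _ => this j), Finset.sum_const, Finset.card_univ,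
      nsmul_eq_mul]
  ext j
  rw [this j, Pi.zero_apply]
  rcases mul_eq_zero.mp hvi with h | h
  · exact absurd h card_ne
  · exact h

noncomputable def Bmat (G : SimpleGraph V) [DecidableRel G.Adj] : Matrix V V ℝ :=
  (G.lapMatrix ℝ + Jmat V)⁻¹ - Jmat V

lemma lap_Bmat_props (hG : G.Connected) :
    G.lapMatrix ℝ * Bmat G = 1 - Jmat V ∧ Bmat G * G.lapMatrix ℝ = 1 - Jmat V ∧
    (Bmat G)ᵀ = Bmat G ∧ Jmat V * Bmat G = 0 := by
  set L := G.lapMatrix ℝ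
  set M := L + Jmat V with hM
  have hdet : IsUnit M.det := by
    rw [isUnit_iff_ne_zero]
    exact Mmat_det_ne_zero G hG
  have hMJ : M * Jmat V = Jmat V := by
    rw [hM, Matrix.add_mul, lap_mul_Jmat, Jmat_mul_Jmat, zero_add]
  have hJM : Jmat V * M = Jmat V := by
    rw [hM, Matrix.mul_add, Jmat_mul_lap, Jmat_mul_Jmat, zero_add]
  have hMinvJ : M⁻¹ * Jmat V = Jmat V := by
    calc M⁻¹ * Jmat V = M⁻¹ * (M * Jmat V) := by rw [hMJ]
    _ = (M⁻¹ * M) * Jmat V := by rw [Matrix.mul_assoc]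
    _ = Jmat V := by rw [Matrix.nonsing_inv_mul M hdet, Matrix.one_mul]
  have hJMinv : Jmat V * M⁻¹ = Jmat V := by
    calc Jmat V * M⁻¹ = (Jmat V * M) * M⁻¹ := by rw [hJM]
    _ = Jmat V * (M * M⁻¹) := by rw [Matrix.mul_assoc]
    _ = Jmat V := by rw [Matrix.mul_nonsing_inv M hdet, Matrix.mul_one]
  have hL : L = M - Jmat V := by rw [hM]; abel
  refine ⟨?_, ?_, ?_, ?_⟩
  · rw [Bmat, hL, Matrix.sub_mul, Matrix.mul_sub, Matrix.mul_sub,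
      Matrix.mul_nonsing_inv M hdet, hMJ, hJMinv, Jmat_mul_Jmat]
    abel
  · rw [Bmat, hL, Matrix.mul_sub, Matrix.sub_mul, Matrix.sub_mul,
      Matrix.nonsing_inv_mul M hdet, hJM, hMinvJ, Jmat_mul_Jmat]
    abel
  · rw [Bmat, Matrix.transpose_sub, Jmat_transpose, Matrix.transpose_nonsing_inv,
      show Mᵀ = M by rw [hM, Matrix.transpose_add, Jmat_transpose, (G.isSymm_lapMatrix (R := ℝ)).eq]]
  · rw [Bmat, Matrix.mul_sub, hJMinv, Jmat_mul_Jmat, sub_self]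

lemma isMP_lap (hG : G.Connected) : IsMP (G.lapMatrix ℝ) (Bmat G) := by
  obtain ⟨h1, h2, h3, h4⟩ := lap_Bmat_props G hG
  refine ⟨?_, ?_, ?_, ?_⟩
  · rw [h1, Matrix.sub_mul, Matrix.one_mul, Jmat_mul_lap, sub_zero]
  · rw [h2, Matrix.sub_mul, Matrix.one_mul, h4, sub_zero]
  · rw [h1, Matrix.transpose_sub, Matrix.transpose_one, Jmat_transpose]
  · rw [h2, Matrix.transpose_sub, Matrix.transpose_one, Jmat_transpose]

/-! ### The variational characterization of the effective conductance -/

lemma resDist_eq' (G : SimpleGraph V) [inst : DecidableRel G.Adj] (i j : V) :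
    resDist G i j = (Pi.single i 1 - Pi.single j 1) ⬝ᵥ
      (pinv (G.lapMatrix ℝ) *ᵥ (Pi.single i 1 - Pi.single j 1)) := by
  unfold resDist
  congr!

lemma dot_mulVec_symm {L : Matrix V V ℝ} (hsym : Lᵀ = L) (u v : V → ℝ) :
    u ⬝ᵥ (L *ᵥ v) = (L *ᵥ u) ⬝ᵥ v := by
  rw [Matrix.dotProduct_mulVec]
  conv_lhs => rw [← hsym]
  rw [Matrix.vecMul_transpose]

lemma resDist_key (G : SimpleGraph V) [inst : DecidableRel G.Adj] (hG : G.Connected) {i j : V}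
    (hij : i ≠ j) :
    0 < resDist G i j ∧
    (∃ g : V → ℝ, (g i - g j = 1) ∧ Egy G g = 1 / resDist G i j) ∧
    (∀ f : V → ℝ, f i - f j = 1 → 1 / resDist G i j ≤ Egy G f) := by
  have hne : Nonempty V := hG.nonempty
  set L := G.lapMatrix ℝ with hLdef
  set x : V → ℝ := Pi.single i 1 - Pi.single j 1 with hxdef
  set g : V → ℝ := Bmat G *ᵥ x with hgdef
  have hres : resDist G i j = x ⬝ᵥ g := by
    rw [resDist_eq', pinv_eq_of_isMP (isMP_lap G hG)]
  have hx : ∀ f : V → ℝ, x ⬝ᵥ f = f i - f j := by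
    intro f
    simp [hxdef, sub_dotProduct, single_dotProduct]
  have hxsum : ∑ k, x k = 0 := by
    simp [hxdef, Finset.sum_sub_distrib]
  have hJx : Jmat V *ᵥ x = 0 := by
    rw [Jmat_mulVec]; ext k; simp [hxsum]
  have hLg : L *ᵥ g = x := by
    rw [hgdef, Matrix.mulVec_mulVec, (lap_Bmat_props G hG).1, Matrix.sub_mulVec,
      Matrix.one_mulVec, hJx, sub_zero]
  have hquad : ∀ f : V → ℝ, ∀ t : ℝ,
      0 ≤ (x ⬝ᵥ g) * (t*t) + (2*(f i - f j)) * t + Egy G f := by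
    intro f t
    have h0 : 0 ≤ Egy G (f + t • g) := Egy_nonneg G _
    have e2 : g ⬝ᵥ (L *ᵥ f) = x ⬝ᵥ f := by
      rw [dot_mulVec_symm (G.isSymm_lapMatrix (R := ℝ)).eq, hLg]
    have hexp : Egy G (f + t • g)
        = Egy G f + t * (x ⬝ᵥ f) + t * (x ⬝ᵥ f) + t^2 * (x ⬝ᵥ g) := by
      simp only [Egy, Matrix.mulVec_add, Matrix.mulVec_smul, hLg,
        add_dotProduct, dotProduct_add, smul_dotProduct,
        dotProduct_smul, smul_eq_mul, e2]
      simp only [← hLdef, hLg, e2]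
      rw [dotProduct_comm f x]
      rw [dotProduct_comm g x]
      ring
    rw [hexp, hx f] at h0
    nlinarith [h0]
  have hpos : 0 < x ⬝ᵥ g := by
    have h := discrim_le_zero (hquad (Pi.single i 1))
    rw [discrim] at h
    have hsing : (Pi.single i 1 : V → ℝ) i - (Pi.single i 1 : V → ℝ) j = 1 := by
      rw [Pi.single_eq_same, Pi.single_eq_of_ne (Ne.symm hij)]; ring
    rw [hsing] at h
    have hE := Egy_nonneg G (Pi.single i 1)
    nlinarith
  have hbound : ∀ f : V → ℝ, f i - f j = 1 → 1 / (x ⬝ᵥ g) ≤ Egy G f := by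
    intro f hf
    have h := discrim_le_zero (hquad f)
    rw [discrim, hf] at h
    rw [div_le_iff₀ hpos]
    nlinarith
  have hgx : g i - g j = x ⬝ᵥ g := (hx g).symm
  refine ⟨hres ▸ hpos, ⟨(x ⬝ᵥ g)⁻¹ • g, ?_, ?_⟩, fun f hf => hres ▸ hbound f hf⟩
  · simp only [Pi.smul_apply, smul_eq_mul]
    rw [← mul_sub, hgx, inv_mul_cancel₀ hpos.ne']
  · rw [hres]
    have : Egy G ((x ⬝ᵥ g)⁻¹ • g) = (x ⬝ᵥ g)⁻¹ * ((x ⬝ᵥ g)⁻¹ * (g ⬝ᵥ (L *ᵥ g))) := by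
      simp only [Egy, Matrix.mulVec_smul, smul_dotProduct, dotProduct_smul,
        smul_eq_mul]
      rfl
    rw [this, hLg, dotProduct_comm g x]
    field_simp

lemma exists_adj_ne {H : SimpleGraph V} {a b : V} (f : V → ℝ) (w : H.Walk a b)
    (hf : f a ≠ f b) : ∃ u v, H.Adj u v ∧ f u ≠ f v := by
  induction w with
  | nil => exact absurd rfl hf
  | @cons a c b h p ih =>
    by_cases hac : f a = f c
    · exact ih (fun hcb => hf (hac.trans hcb))
    · exact ⟨a, c, h, hac⟩

end Graph

theorem stmt3 {V : Type*} [Fintype V] [DecidableEq V] (G H : SimpleGraph V)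
    (hG : G.Connected) (hH : H.Connected) (hle : H ≤ G) (hne : H ≠ G) :
    cyclicity H < cyclicity G := by
  letI instG : DecidableRel G.Adj := Classical.decRel _
  letI instH : DecidableRel H.Adj := Classical.decRel _
  have hNV : Nonempty V := hG.nonempty
  have hlt : H < G := lt_of_le_of_ne hle hne
  unfold cyclicity
  -- nonnegativity of the conductance term for every edge of G
  have hnonnegG : ∀ e ∈ G.edgeFinset,
      0 ≤ Sym2.lift ⟨fun i j => 1 / resDist G i j - 1,
        fun i j => by simp only []; rw [resDist_comm G i j]⟩ e := by
    intro e
    induction e using Sym2.ind with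
    | _ i j =>
      intro he
      rw [Sym2.lift_mk]
      simp only [SimpleGraph.mem_edgeFinset, SimpleGraph.mem_edgeSet] at he
      obtain ⟨hpos, ⟨g, hg1, hg2⟩, _⟩ := resDist_key G hG he.ne
      have h1 : (1:ℝ) ≤ 1 / resDist G i j := by
        rw [← hg2]
        calc (1:ℝ) = (g i - g j)^2 := by rw [hg1]; norm_num
        _ ≤ Egy G g := Egy_ge_one he g
      linarith
  -- monotonicity of the conductance term over edges of H
  have hmono : ∀ e ∈ H.edgeFinset,
      Sym2.lift ⟨fun i j => 1 / resDist H i j - 1,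
        fun i j => by simp only []; rw [resDist_comm H i j]⟩ e ≤
      Sym2.lift ⟨fun i j => 1 / resDist G i j - 1,
        fun i j => by simp only []; rw [resDist_comm G i j]⟩ e := by
    intro e
    induction e using Sym2.ind with
    | _ i j =>
      intro he
      rw [Sym2.lift_mk, Sym2.lift_mk]
      simp only [SimpleGraph.mem_edgeFinset, SimpleGraph.mem_edgeSet] at he
      have hij : i ≠ j := he.ne
      obtain ⟨hposG, ⟨g, hg1, hg2⟩, _⟩ := resDist_key G hG hij
      obtain ⟨hposH, _, hboundH⟩ := resDist_key H hH hij
      have : 1 / resDist H i j ≤ 1 / resDist G i j := by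
        calc 1 / resDist H i j ≤ Egy H g := hboundH g hg1
        _ ≤ Egy G g := Egy_mono hle g
        _ = 1 / resDist G i j := hg2
      linarith
  -- a strict edge
  have hsub : H.edgeFinset ⊆ G.edgeFinset := SimpleGraph.edgeFinset_mono hle
  obtain ⟨e₀, he₀G, he₀H⟩ :=
    Finset.exists_of_ssubset (SimpleGraph.edgeFinset_ssubset_edgeFinset.mpr hlt)
  -- strict positivity at e₀
  have hstrict : 0 < Sym2.lift ⟨fun i j => 1 / resDist G i j - 1,
      fun i j => by simp only []; rw [resDist_comm G i j]⟩ e₀ := by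
    induction e₀ using Sym2.ind with
    | _ a b =>
      rw [Sym2.lift_mk]
      simp only [SimpleGraph.mem_edgeFinset, SimpleGraph.mem_edgeSet] at he₀G he₀H
      have hab : G.Adj a b := he₀G
      obtain ⟨hpos, ⟨g, hg1, hg2⟩, _⟩ := resDist_key G hG hab.ne
      obtain ⟨w⟩ := hH.preconnected a b
      have hfab : g a ≠ g b := by
        intro hgab
        rw [hgab, sub_self] at hg1
        norm_num at hg1
      obtain ⟨u, v, huv, hguv⟩ := exists_adj_ne g w hfab
      have hnee : ¬(s(a,b) = s(u,v)) := by
        intro hsy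
        rw [Sym2.eq_iff] at hsy
        rcases hsy with ⟨rfl, rfl⟩ | ⟨rfl, rfl⟩
        · exact he₀H huv
        · exact he₀H huv.symm
      have hge := Egy_ge_two hab (hle huv) hnee g
      have hsq : 0 < (g u - g v)^2 :=
        lt_of_le_of_ne (sq_nonneg _) (Ne.symm (pow_ne_zero 2 (sub_ne_zero.mpr hguv)))
      have h1 : (1:ℝ) + (g u - g v)^2 ≤ 1 / resDist G a b := by
        rw [← hg2]
        calc (1:ℝ) + (g u - g v)^2 = (g a - g b)^2 + (g u - g v)^2 := by rw [hg1]; norm_num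
        _ ≤ Egy G g := hge
      linarith
  calc (∑ e ∈ H.edgeFinset, Sym2.lift ⟨fun i j => 1 / resDist H i j - 1,
          fun i j => by simp only []; rw [resDist_comm H i j]⟩ e)
      ≤ ∑ e ∈ H.edgeFinset, Sym2.lift ⟨fun i j => 1 / resDist G i j - 1,
          fun i j => by simp only []; rw [resDist_comm G i j]⟩ e := Finset.sum_le_sum hmono
    _ < ∑ e ∈ G.edgeFinset, Sym2.lift ⟨fun i j => 1 / resDist G i j - 1,
          fun i j => by simp only []; rw [resDist_comm G i j]⟩ e :=
        Finset.sum_lt_sum_of_subset hsub he₀G he₀H hstrict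
          (fun e heG _ => hnonnegG e heG)
end

section
/- For the complete bipartite graph K_{n₁,n₂} with parts of sizes n₁ ≥ 1 and n₂ ≥ 1, the global cyclicity index equals C(K_{n₁,n₂}) = n₁n₂(n₁n₂ − n₁ − n₂ + 1)/(n₁ + n₂ − 1). -/
open Matrix Finset

/-! ### Auxiliary results -/

/-- Uniqueness of the Moore–Penrose pseudoinverse. -/
lemma MP_unique {n : Type*} [Fintype n] [DecidableEq n] (A B C : Matrix n n ℝ)
    (hB : A * B * A = A ∧ B * A * B = B ∧ (A * B)ᵀ = A * B ∧ (B * A)ᵀ = B * A)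
    (hC : A * C * A = A ∧ C * A * C = C ∧ (A * C)ᵀ = A * C ∧ (C * A)ᵀ = C * A) :
    B = C := by
  obtain ⟨hB1, hB2, hB3, hB4⟩ := hB
  obtain ⟨hC1, hC2, hC3, hC4⟩ := hC
  have hAB : A * B = A * C := by
    have key : (A*B)ᵀ * (A*C)ᵀ = A * C := by
      rw [hB3, hC3]
      calc (A*B)*(A*C) = (A*B*A)*C := by noncomm_ring
        _ = A*C := by rw [hB1]
    have key2 : (A*B)ᵀ * (A*C)ᵀ = A * B := by
      rw [← transpose_mul]
      have : (A*C)*(A*B) = A*B := by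
        calc (A*C)*(A*B) = (A*C*A)*B := by noncomm_ring
          _ = A*B := by rw [hC1]
      rw [this, hB3]
    exact key2.symm.trans key
  have hBA : B * A = C * A := by
    have key : (C*A)ᵀ * (B*A)ᵀ = C * A := by
      rw [hC4, hB4]
      calc (C*A)*(B*A) = C*(A*B*A) := by noncomm_ring
        _ = C*A := by rw [hB1]
    have key2 : (C*A)ᵀ * (B*A)ᵀ = B * A := by
      rw [← transpose_mul]
      have : (B*A)*(C*A) = B*A := by
        calc (B*A)*(C*A) = B*(A*C*A) := by noncomm_ring
          _ = B*A := by rw [hC1]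
      rw [this, hB4]
    exact key2.symm.trans key
  calc B = B*A*B := hB2.symm
    _ = B*(A*B) := by rw [mul_assoc]
    _ = B*(A*C) := by rw [hAB]
    _ = (B*A)*C := by rw [mul_assoc]
    _ = (C*A)*C := by rw [hBA]
    _ = C := hC2

lemma pinv_eq {n : Type*} [Fintype n] [DecidableEq n] (A B : Matrix n n ℝ)
    (h : A * B * A = A ∧ B * A * B = B ∧ (A * B)ᵀ = A * B ∧ (B * A)ᵀ = B * A) :
    pinv A = B := by
  unfold pinv
  have hex : ∃ B, A * B * A = A ∧ B * A * B = B ∧ (A * B)ᵀ = A * B ∧ (B * A)ᵀ = B * A := ⟨B, h⟩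
  rw [dif_pos hex]
  exact MP_unique A _ B hex.choose_spec h

/-- The Laplacian matrix of the complete bipartite graph, explicitly. -/
def Lmat (m n : ℕ) : Matrix (Fin m ⊕ Fin n) (Fin m ⊕ Fin n) ℝ
  | Sum.inl i, Sum.inl i' => if i = i' then (n : ℝ) else 0
  | Sum.inr j, Sum.inr j' => if j = j' then (m : ℝ) else 0
  | _, _ => -1

/-- The Moore–Penrose pseudoinverse of the Laplacian of the complete bipartite graph. -/
noncomputable def Mmat (m n : ℕ) : Matrix (Fin m ⊕ Fin n) (Fin m ⊕ Fin n) ℝ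
  | Sum.inl i, Sum.inl i' => (if i = i' then (n : ℝ)⁻¹ else 0) - ((m : ℝ)*n)⁻¹ + n/(m*((m:ℝ)+n)^2)
  | Sum.inr j, Sum.inr j' => (if j = j' then (m : ℝ)⁻¹ else 0) - ((m : ℝ)*n)⁻¹ + m/(n*((m:ℝ)+n)^2)
  | _, _ => -(((m:ℝ)+n)^2)⁻¹

/-- The scaled all-ones matrix `J/(m+n)`. -/
noncomputable def Kmat (m n : ℕ) : Matrix (Fin m ⊕ Fin n) (Fin m ⊕ Fin n) ℝ :=
  Matrix.of fun _ _ => ((m:ℝ)+n)⁻¹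

lemma lap_eq (m n : ℕ) :
    (letI : DecidableRel (completeBipartiteGraph (Fin m) (Fin n)).Adj := Classical.decRel _
     (completeBipartiteGraph (Fin m) (Fin n)).lapMatrix ℝ) = Lmat m n := by
  letI : DecidableRel (completeBipartiteGraph (Fin m) (Fin n)).Adj := Classical.decRel _
  have hdegl : ∀ i : Fin m, (completeBipartiteGraph (Fin m) (Fin n)).degree (Sum.inl i) = n := by
    intro i
    have : (completeBipartiteGraph (Fin m) (Fin n)).neighborFinset (Sum.inl i)
        = Finset.univ.map ⟨Sum.inr, Sum.inr_injective⟩ := by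
      ext b; cases b <;> simp [SimpleGraph.mem_neighborFinset]
    rw [SimpleGraph.degree, this]; simp
  have hdegr : ∀ j : Fin n, (completeBipartiteGraph (Fin m) (Fin n)).degree (Sum.inr j) = m := by
    intro j
    have : (completeBipartiteGraph (Fin m) (Fin n)).neighborFinset (Sum.inr j)
        = Finset.univ.map ⟨Sum.inl, Sum.inl_injective⟩ := by
      ext b; cases b <;> simp [SimpleGraph.mem_neighborFinset]
    rw [SimpleGraph.degree, this]; simp
  ext a b
  cases a with
  | inl i => cases b with
    | inl i' =>
      simp [SimpleGraph.lapMatrix, SimpleGraph.degMatrix, Matrix.diagonal, hdegl, Lmat]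
    | inr j => simp [SimpleGraph.lapMatrix, SimpleGraph.degMatrix, Matrix.diagonal, Lmat]
  | inr j => cases b with
    | inl i => simp [SimpleGraph.lapMatrix, SimpleGraph.degMatrix, Matrix.diagonal, Lmat]
    | inr j' =>
      simp [SimpleGraph.lapMatrix, SimpleGraph.degMatrix, Matrix.diagonal, hdegr, Lmat]

lemma Lmat_mul_Mmat (m n : ℕ) (hm : 0 < m) (hn : 0 < n) :
    Lmat m n * Mmat m n = 1 - Kmat m n := by
  have hm' : (m:ℝ) ≠ 0 := Nat.cast_ne_zero.mpr hm.ne'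
  have hn' : (n:ℝ) ≠ 0 := Nat.cast_ne_zero.mpr hn.ne'
  have hN : (m:ℝ) + n ≠ 0 := by positivity
  ext a b
  rw [Matrix.mul_apply, Fintype.sum_sum_type]
  cases a with
  | inl i => cases b with
    | inl i' =>
      simp only [Lmat, Mmat, Kmat, Matrix.sub_apply, Matrix.one_apply, Matrix.of_apply,
        ite_mul, zero_mul, Finset.sum_ite_eq, Finset.mem_univ, if_true, Finset.sum_const,
        Finset.card_univ, Fintype.card_fin, nsmul_eq_mul, Sum.inl.injEq, neg_one_mul,
        mul_neg, Finset.sum_neg_distrib]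
      by_cases h : i = i' <;> simp only [h, if_true, if_false] <;> field_simp <;> ring
    | inr j =>
      simp only [Lmat, Mmat, Kmat, Matrix.sub_apply, Matrix.one_apply, Matrix.of_apply,
        ite_mul, zero_mul, Finset.sum_ite_eq, Finset.mem_univ, if_true, Finset.sum_const,
        Finset.card_univ, Fintype.card_fin, nsmul_eq_mul, neg_one_mul, mul_neg,
        Finset.sum_neg_distrib, Finset.sum_add_distrib, Finset.sum_sub_distrib,
        Finset.sum_ite_eq', reduceCtorEq, if_false]
      field_simp
      ring
  | inr j => cases b with
    | inl i =>
      simp only [Lmat, Mmat, Kmat, Matrix.sub_apply, Matrix.one_apply, Matrix.of_apply,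
        ite_mul, zero_mul, Finset.sum_ite_eq, Finset.mem_univ, if_true, Finset.sum_const,
        Finset.card_univ, Fintype.card_fin, nsmul_eq_mul, neg_one_mul, mul_neg,
        Finset.sum_neg_distrib, Finset.sum_add_distrib, Finset.sum_sub_distrib,
        Finset.sum_ite_eq', reduceCtorEq, if_false]
      field_simp
      ring
    | inr j' =>
      simp only [Lmat, Mmat, Kmat, Matrix.sub_apply, Matrix.one_apply, Matrix.of_apply,
        ite_mul, zero_mul, Finset.sum_ite_eq, Finset.mem_univ, if_true, Finset.sum_const,
        Finset.card_univ, Fintype.card_fin, nsmul_eq_mul, Sum.inr.injEq, neg_one_mul,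
        mul_neg, Finset.sum_neg_distrib]
      by_cases h : j = j' <;> simp only [h, if_true, if_false] <;> field_simp <;> ring

lemma Lmat_transpose (m n : ℕ) : (Lmat m n)ᵀ = Lmat m n := by
  ext a b; cases a <;> cases b <;> simp [Lmat, Matrix.transpose_apply, eq_comm]

lemma Mmat_transpose (m n : ℕ) : (Mmat m n)ᵀ = Mmat m n := by
  ext a b; cases a <;> cases b <;> simp [Mmat, Matrix.transpose_apply, eq_comm]

lemma Kmat_transpose (m n : ℕ) : (Kmat m n)ᵀ = Kmat m n := by
  ext a b; rfl

lemma Kmat_mul_Lmat (m n : ℕ) : Kmat m n * Lmat m n = 0 := by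
  ext a b
  rw [Matrix.mul_apply, Fintype.sum_sum_type]
  cases b <;>
  simp [Lmat, Kmat, Finset.sum_ite_eq', mul_ite, Finset.sum_add_distrib,
    Finset.sum_sub_distrib, Matrix.zero_apply] <;> ring

lemma Kmat_mul_Mmat (m n : ℕ) (hm : 0 < m) (hn : 0 < n) : Kmat m n * Mmat m n = 0 := by
  have hm' : (m:ℝ) ≠ 0 := Nat.cast_ne_zero.mpr hm.ne'
  have hn' : (n:ℝ) ≠ 0 := Nat.cast_ne_zero.mpr hn.ne'
  have hN : (m:ℝ) + n ≠ 0 := by positivity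
  ext a b
  rw [Matrix.mul_apply, Fintype.sum_sum_type]
  cases b <;>
  simp [Mmat, Kmat, Finset.sum_ite_eq', mul_ite, mul_add, mul_sub, Finset.sum_add_distrib,
    Finset.sum_sub_distrib, Matrix.zero_apply] <;> field_simp <;> ring

lemma Mmat_mul_Lmat (m n : ℕ) (hm : 0 < m) (hn : 0 < n) :
    Mmat m n * Lmat m n = 1 - Kmat m n := by
  calc Mmat m n * Lmat m n = (Mmat m n)ᵀ * (Lmat m n)ᵀ := by
        rw [Mmat_transpose, Lmat_transpose]
    _ = (Lmat m n * Mmat m n)ᵀ := (Matrix.transpose_mul _ _).symm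
    _ = (1 - Kmat m n)ᵀ := by rw [Lmat_mul_Mmat m n hm hn]
    _ = 1 - Kmat m n := by rw [Matrix.transpose_sub, Matrix.transpose_one, Kmat_transpose]

lemma penrose (m n : ℕ) (hm : 0 < m) (hn : 0 < n) :
    Lmat m n * Mmat m n * Lmat m n = Lmat m n ∧
    Mmat m n * Lmat m n * Mmat m n = Mmat m n ∧
    (Lmat m n * Mmat m n)ᵀ = Lmat m n * Mmat m n ∧
    (Mmat m n * Lmat m n)ᵀ = Mmat m n * Lmat m n := by
  have h1 := Lmat_mul_Mmat m n hm hn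
  have h2 := Mmat_mul_Lmat m n hm hn
  have hsym : (1 - Kmat m n)ᵀ = 1 - Kmat m n := by
    rw [Matrix.transpose_sub, Matrix.transpose_one, Kmat_transpose]
  refine ⟨?_, ?_, ?_, ?_⟩
  · rw [h1, sub_mul, one_mul, Kmat_mul_Lmat, sub_zero]
  · rw [h2, sub_mul, one_mul, Kmat_mul_Mmat m n hm hn, sub_zero]
  · rw [h1, hsym]
  · rw [h2, hsym]

lemma resDist_val (m n : ℕ) (hm : 0 < m) (hn : 0 < n) (i : Fin m) (j : Fin n) :
    resDist (completeBipartiteGraph (Fin m) (Fin n)) (Sum.inl i) (Sum.inr j)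
      = ((m:ℝ) + n - 1) / (m * n) := by
  have hm' : (m:ℝ) ≠ 0 := Nat.cast_ne_zero.mpr hm.ne'
  have hn' : (n:ℝ) ≠ 0 := Nat.cast_ne_zero.mpr hn.ne'
  have hN : (m:ℝ) + n ≠ 0 := by positivity
  unfold resDist
  rw [lap_eq m n, pinv_eq _ (Mmat m n) (penrose m n hm hn)]
  rw [Matrix.mulVec_sub, Matrix.mulVec_single, Matrix.mulVec_single,
    sub_dotProduct, single_dotProduct, single_dotProduct]
  simp only [Pi.sub_apply, MulOpposite.op_one, one_smul, Matrix.col_apply, mul_one, one_mul, Mmat, if_pos rfl, if_true]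
  field_simp
  ring

lemma edge_eq (m n : ℕ) :
    (letI : DecidableRel (completeBipartiteGraph (Fin m) (Fin n)).Adj := Classical.decRel _
     (completeBipartiteGraph (Fin m) (Fin n)).edgeFinset) =
    (Finset.univ : Finset (Fin m × Fin n)).image (fun p => s(Sum.inl p.1, Sum.inr p.2)) := by
  letI : DecidableRel (completeBipartiteGraph (Fin m) (Fin n)).Adj := Classical.decRel _
  ext e
  induction e with
  | _ a b =>
    cases a <;> cases b <;>
      simp [SimpleGraph.mem_edgeFinset, SimpleGraph.mem_edgeSet, Sym2.eq_iff]

theorem stmt5 (n₁ n₂ : ℕ) (h₁ : 1 ≤ n₁) (h₂ : 1 ≤ n₂) :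
    cyclicity (completeBipartiteGraph (Fin n₁) (Fin n₂)) =
      (n₁ : ℝ) * n₂ * ((n₁ : ℝ) * n₂ - n₁ - n₂ + 1) / ((n₁ : ℝ) + n₂ - 1) := by
  have hm : 0 < n₁ := h₁
  have hn : 0 < n₂ := h₂
  have hm' : (n₁:ℝ) ≠ 0 := Nat.cast_ne_zero.mpr hm.ne'
  have hn' : (n₂:ℝ) ≠ 0 := Nat.cast_ne_zero.mpr hn.ne'
  have hD : (n₁:ℝ) + n₂ - 1 ≠ 0 := by
    have h1 : (1:ℝ) ≤ (n₁:ℝ) := by exact_mod_cast h₁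
    have h2 : (1:ℝ) ≤ (n₂:ℝ) := by exact_mod_cast h₂
    nlinarith
  unfold cyclicity
  rw [edge_eq n₁ n₂]
  rw [Finset.sum_image (by
    intro p _ q _ h
    simp only [Sym2.eq_iff, Sum.inl.injEq, Sum.inr.injEq, reduceCtorEq, false_and,
      and_false, or_false] at h
    exact Prod.ext h.1 h.2)]
  have hval : ∀ p : Fin n₁ × Fin n₂,
      (1 : ℝ) / resDist (completeBipartiteGraph (Fin n₁) (Fin n₂))
        (Sum.inl p.1) (Sum.inr p.2) - 1
      = (n₁:ℝ) * n₂ / ((n₁:ℝ) + n₂ - 1) - 1 := by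
    intro p
    rw [resDist_val n₁ n₂ hm hn p.1 p.2, one_div_div]
  simp only [Sym2.lift_mk]
  rw [Finset.sum_congr rfl (fun p _ => hval p)]
  rw [Finset.sum_const, Finset.card_univ, Fintype.card_prod, Fintype.card_fin,
    Fintype.card_fin, nsmul_eq_mul, Nat.cast_mul]
  field_simp
  ring
end

section
/- Let G be a connected r-regular simple graph with n vertices, where r ≥ 2. Then C(G) ≤ n·r·(r−1)/4. -/
open Matrix Finset

lemma exists_pinv_of_isHermitian {n : Type*} [Fintype n] [DecidableEq n]
    {A : Matrix n n ℝ} (hA : A.IsHermitian) :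
    ∃ B, A * B * A = A ∧ B * A * B = B ∧ (A * B)ᵀ = A * B ∧ (B * A)ᵀ = B * A := by
  classical
  set U : Matrix n n ℝ := (Matrix.IsHermitian.eigenvectorUnitary hA : Matrix n n ℝ) with hUdef
  have hU1 : star U * U = 1 := Unitary.coe_star_mul_self (Matrix.IsHermitian.eigenvectorUnitary hA)
  set μ : n → ℝ := hA.eigenvalues with hμ
  have hAd : A = U * diagonal μ * star U := by
    have := hA.spectral_theorem
    simpa using this
  set d' : n → ℝ := fun i => if μ i = 0 then 0 else (μ i)⁻¹ with hd'
  have hmid : ∀ (X Y : Matrix n n ℝ), (X * star U) * (U * Y) = X * Y := by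
    intro X Y
    rw [Matrix.mul_assoc, ← Matrix.mul_assoc (star U) U Y, hU1, Matrix.one_mul]
  have key : ∀ e f : n → ℝ, (U * diagonal e * star U) * (U * diagonal f * star U)
      = U * diagonal (fun i => e i * f i) * star U := by
    intro e f
    rw [Matrix.mul_assoc U (diagonal f) (star U), hmid (U * diagonal e) (diagonal f * star U),
      show U * diagonal e * (diagonal f * star U) = U * (diagonal e * diagonal f) * star U by
        rw [Matrix.mul_assoc U (diagonal e), ← Matrix.mul_assoc (diagonal e), ← Matrix.mul_assoc],
      diagonal_mul_diagonal]
  have base : ∀ (g h : n → ℝ), g = h → U * diagonal g * star U = U * diagonal h * star U := by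
    rintro g h rfl; rfl
  have htrans : ∀ g : n → ℝ, (U * diagonal g * star U)ᵀ = U * diagonal g * star U := by
    intro g
    have h2 : (U * diagonal g * star U)ᴴ = U * diagonal g * star U := by
      simp [conjTranspose_mul, diagonal_conjTranspose, Matrix.mul_assoc,
        Matrix.star_eq_conjTranspose]
    rw [← conjTranspose_eq_transpose_of_trivial]
    exact h2
  refine ⟨U * diagonal d' * star U, ?_, ?_, ?_, ?_⟩
  · rw [hAd, key, key]
    exact base _ _ (funext fun i => by by_cases h : μ i = 0 <;> simp [hd', h])
  · rw [hAd, key, key]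
    exact base _ _ (funext fun i => by by_cases h : μ i = 0 <;> simp [hd', h])
  · rw [hAd, key]; exact htrans _
  · rw [hAd, key]; exact htrans _

lemma pinv_spec {n : Type*} [Fintype n] [DecidableEq n]
    {A : Matrix n n ℝ} (hA : A.IsHermitian) :
    A * pinv A * A = A ∧ pinv A * A * pinv A = pinv A ∧
      (A * pinv A)ᵀ = A * pinv A ∧ (pinv A * A)ᵀ = pinv A * A := by
  have h := exists_pinv_of_isHermitian hA
  rw [pinv, dif_pos h]
  exact h.choose_spec


lemma lap_range {V : Type*} [Fintype V] [DecidableEq V] (G : SimpleGraph V)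
    [DecidableRel G.Adj] (hG : G.Connected) (x : V → ℝ) (hx : ∑ v, x v = 0) :
    ∃ y : V → ℝ, (G.lapMatrix ℝ) *ᵥ y = x := by
  classical
  obtain ⟨v0⟩ := hG.nonempty
  set f : (V → ℝ) →ₗ[ℝ] (V → ℝ) := Matrix.mulVecLin (G.lapMatrix ℝ) with hf
  have hker : LinearMap.ker f = Submodule.span ℝ {(fun _ => 1 : V → ℝ)} := by
    ext z
    rw [LinearMap.mem_ker, Submodule.mem_span_singleton]
    constructor
    · intro hz
      have hz' : Matrix.toLin' (G.lapMatrix ℝ) z = 0 := by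
        rw [Matrix.toLin'_apply]; exact hz
      have hc := (G.lapMatrix_mulVec_eq_zero_iff_forall_reachable (x := z)).mp hz
      exact ⟨z v0, funext fun w => by
        simp only [Pi.smul_apply, smul_eq_mul, mul_one]
        exact (hc v0 w (hG.preconnected v0 w))⟩
    · rintro ⟨c, rfl⟩
      show (G.lapMatrix ℝ) *ᵥ (c • fun _ => (1:ℝ)) = 0
      rw [Matrix.mulVec_smul, G.lapMatrix_mulVec_const_eq_zero, smul_zero]
  set S : (V → ℝ) →ₗ[ℝ] ℝ := ∑ v : V, LinearMap.proj v with hS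
  have hSapp : ∀ z : V → ℝ, S z = ∑ v, z v := by
    intro z; simp [hS]
  have hSsurj : LinearMap.range S = ⊤ := by
    rw [LinearMap.range_eq_top]
    intro c
    exact ⟨Pi.single v0 c, by simp [hSapp, Finset.sum_pi_single]⟩
  have hn1 : 1 ≤ Fintype.card V := Fintype.card_pos_iff.mpr ⟨v0⟩
  have hrk : Module.finrank ℝ (V → ℝ) = Fintype.card V := by
    simp [Module.finrank_pi]
  have hkerS : Module.finrank ℝ (LinearMap.ker S) = Fintype.card V - 1 := by
    have h1 := LinearMap.finrank_range_add_finrank_ker S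
    rw [hSsurj, finrank_top, hrk] at h1
    have : Module.finrank ℝ ℝ = 1 := Module.finrank_self ℝ
    omega
  have hkerf : Module.finrank ℝ (LinearMap.ker f) = 1 := by
    rw [hker]
    refine finrank_span_singleton ?_
    intro h
    have := congrFun h v0
    simp at this
  have hrangef : Module.finrank ℝ (LinearMap.range f) = Fintype.card V - 1 := by
    have h1 := LinearMap.finrank_range_add_finrank_ker f
    rw [hkerf, hrk] at h1
    omega
  have hle : LinearMap.range f ≤ LinearMap.ker S := by
    rintro _ ⟨y, rfl⟩
    rw [LinearMap.mem_ker, hSapp]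
    have : ∑ v, (f y) v = (fun _ => (1:ℝ)) ⬝ᵥ ((G.lapMatrix ℝ) *ᵥ y) := by
      simp [hf, dotProduct, Matrix.mulVecLin_apply]
    rw [this, Matrix.dotProduct_mulVec, ← Matrix.mulVec_transpose,
      (G.isSymm_lapMatrix (R := ℝ)).eq, G.lapMatrix_mulVec_const_eq_zero, zero_dotProduct]
  have heq : LinearMap.range f = LinearMap.ker S :=
    Submodule.eq_of_le_of_finrank_eq hle (by rw [hrangef, hkerS])
  have hxmem : x ∈ LinearMap.ker S := by rw [LinearMap.mem_ker, hSapp]; exact hx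
  rw [← heq] at hxmem
  obtain ⟨y, hy⟩ := hxmem
  exact ⟨y, hy⟩

lemma resDist_edge_bound {V : Type*} [Fintype V] [DecidableEq V] (G : SimpleGraph V)
    [inst : DecidableRel G.Adj] (hG : G.Connected) {r : ℕ} (hreg : G.IsRegularOfDegree r)
    {i j : V} (hij : G.Adj i j) :
    1 / resDist G i j - 1 ≤ ((r : ℝ) - 1) / 2 := by
  set L := G.lapMatrix ℝ with hL
  set x : V → ℝ := Pi.single i 1 - Pi.single j 1 with hxdef
  have hrd : resDist G i j = x ⬝ᵥ (pinv L) *ᵥ x := by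
    rw [resDist]
    congr!
  have hherm : L.IsHermitian := (G.posSemidef_lapMatrix ℝ).1
  obtain ⟨hP1, hP2, hP3, hP4⟩ := pinv_spec hherm
  have hdot : ∀ z : V → ℝ, x ⬝ᵥ z = z i - z j := by
    intro z
    simp [hxdef, sub_dotProduct, single_dotProduct]
  have hmv : ∀ (M : Matrix V V ℝ), M *ᵥ x = fun k => M k i - M k j := by
    intro M
    funext k
    simp [hxdef, Matrix.mulVec_sub, Matrix.mulVec_single]
  have hLii : ∀ v, L v v = r := by
    intro v
    simp [hL, SimpleGraph.lapMatrix, SimpleGraph.degMatrix, hreg v]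
  have hLij : L i j = -1 := by
    simp [hL, SimpleGraph.lapMatrix, SimpleGraph.degMatrix, Matrix.diagonal_apply_ne _ hij.ne, hij]
  have hLji : L j i = -1 := by
    simp [hL, SimpleGraph.lapMatrix, SimpleGraph.degMatrix,
      Matrix.diagonal_apply_ne _ hij.ne', hij.symm]
  have hxLx : x ⬝ᵥ (L *ᵥ x) = 2 * r + 2 := by
    rw [hmv, hdot]
    show L i i - L i j - (L j i - L j j) = 2 * r + 2
    rw [hLii, hLii, hLij, hLji]
    ring
  have hxx : x ⬝ᵥ x = 2 := by
    rw [hdot]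
    simp [hxdef, Pi.single_eq_same, Pi.single_eq_of_ne hij.ne, Pi.single_eq_of_ne hij.ne']
    norm_num
  have hxsum : ∑ v, x v = 0 := by
    simp [hxdef, Finset.sum_sub_distrib, Finset.sum_pi_single]
  obtain ⟨y, hy⟩ := lap_range G hG x hxsum
  have hswap : ∀ (M : Matrix V V ℝ) (u w : V → ℝ), (M *ᵥ u) ⬝ᵥ w = u ⬝ᵥ (Mᵀ *ᵥ w) := by
    intro M u w
    rw [dotProduct_comm, Matrix.dotProduct_mulVec, ← Matrix.mulVec_transpose,
      dotProduct_comm]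
  have hsymL : Lᵀ = L := G.isSymm_lapMatrix (R := ℝ)
  have hΩ : resDist G i j = y ⬝ᵥ (L *ᵥ y) := by
    rw [hrd, ← hy]
    rw [hswap L y (pinv L *ᵥ (L *ᵥ y)), hsymL]
    rw [Matrix.mulVec_mulVec, Matrix.mulVec_mulVec, hP1]
  obtain ⟨C, hC⟩ : ∃ C : Matrix V V ℝ, G.lapMatrix ℝ = Cᴴ * C := by
    open scoped MatrixOrder in
    obtain ⟨C, hC⟩ := CStarAlgebra.nonneg_iff_eq_star_mul_self.mp (G.posSemidef_lapMatrix ℝ).nonneg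
    exact ⟨C, hC⟩
  have hCform : ∀ a b : V → ℝ, a ⬝ᵥ (L *ᵥ b) = (C *ᵥ a) ⬝ᵥ (C *ᵥ b) := by
    intro a b
    rw [hL, hC, ← Matrix.mulVec_mulVec, Matrix.dotProduct_mulVec a,
      Matrix.conjTranspose_eq_transpose_of_trivial, Matrix.vecMul_transpose]
  have hcs : (x ⬝ᵥ (L *ᵥ y))^2 ≤ (x ⬝ᵥ (L *ᵥ x)) * (y ⬝ᵥ (L *ᵥ y)) := by
    rw [hCform x y, hCform x x, hCform y y]
    have h := Finset.sum_mul_sq_le_sq_mul_sq Finset.univ (C *ᵥ x) (C *ᵥ y)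
    simpa [dotProduct, pow_two] using h
  have hm2 : x ⬝ᵥ (L *ᵥ y) = 2 := by rw [hL, hy]; exact hxx
  rw [hm2, hxLx, ← hΩ] at hcs
  set Ω := resDist G i j with hΩdef
  have h4 : (4 : ℝ) ≤ (2 * r + 2) * Ω := by nlinarith
  have hrpos : (0:ℝ) < 2 * r + 2 := by positivity
  have hΩpos : 0 < Ω := by nlinarith
  have h1 : 1 / Ω ≤ ((r:ℝ) + 1) / 2 := by
    rw [div_le_div_iff₀ hΩpos two_pos]
    nlinarith
  linarith

lemma edgeFinset_card_eq {V : Type*} [Fintype V] [DecidableEq V] (G : SimpleGraph V)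
    (i1 i2 : Fintype G.edgeSet) :
    #(@SimpleGraph.edgeFinset V G i1) = #(@SimpleGraph.edgeFinset V G i2) := by
  congr 1
  ext e
  simp [SimpleGraph.mem_edgeFinset]

theorem stmt11 {V : Type*} [Fintype V] [DecidableEq V] (G : SimpleGraph V) [DecidableRel G.Adj]
    (hG : G.Connected) (r n : ℕ) (hr : 2 ≤ r) (hreg : G.IsRegularOfDegree r)
    (hn : n = Fintype.card V) :
    cyclicity G ≤ (n : ℝ) * r * ((r : ℝ) - 1) / 4 := by
  have hdeg : ∑ v, G.degree v = n * r := by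
    rw [hn, Finset.sum_congr rfl fun v _ => hreg v, Finset.sum_const, Finset.card_univ,
      smul_eq_mul]
  have hEcard : ∀ (i2 : Fintype G.edgeSet),
      ((#(@SimpleGraph.edgeFinset V G i2) : ℕ) : ℝ) = n * r / 2 := by
    intro i2
    have h0 := G.sum_degrees_eq_twice_card_edges
    rw [edgeFinset_card_eq G _ i2] at h0
    have h2 : (n * r : ℕ) = 2 * #(@SimpleGraph.edgeFinset V G i2) := by rw [← hdeg, h0]
    have h3 := congrArg (fun k : ℕ => (k : ℝ)) h2
    push_cast at h3
    linarith
  rw [cyclicity]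
  refine (Finset.sum_le_card_nsmul _ _ (((r : ℝ) - 1) / 2) ?_).trans ?_
  · intro e
    refine Sym2.ind (fun a b hab => ?_) e
    rw [Sym2.lift_mk]
    have hab' : G.Adj a b := by simpa using hab
    exact resDist_edge_bound G hG hreg hab'
  · rw [nsmul_eq_mul, hEcard]
    exact le_of_eq (by ring)
end

section
/- Let G be a finite connected simple graph with m edges and maximum degree Δ(G). Then C(G) ≤ m(Δ(G) − 1)/2. -/
open Matrix Finset

lemma key {V : Type*} [Fintype V] [DecidableEq V] (G : SimpleGraph V)
    (hG : G.Connected) {i j : V} (hij : G.Adj i j) :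
    letI : DecidableRel G.Adj := Classical.decRel _
    1 / resDist G i j - 1 ≤ ((G.maxDegree : ℝ) - 1) / 2 := by
  letI : DecidableRel G.Adj := Classical.decRel G.Adj
  set L := G.lapMatrix ℝ with hLdef
  set b : V → ℝ := Pi.single i 1 - Pi.single j 1 with hbdef
  have hres : resDist G i j = b ⬝ᵥ (pinv L) *ᵥ b := rfl
  by_cases h : ∃ B, L * B * L = L ∧ B * L * B = B ∧ (L * B)ᵀ = L * B ∧ (B * L)ᵀ = B * L
  case neg =>
    rw [hres, pinv, dif_neg h]
    simp only [Matrix.zero_mulVec, dotProduct_zero]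
    have : (0:ℝ) ≤ (G.maxDegree : ℝ) := Nat.cast_nonneg _
    rw [div_zero]
    linarith
  case pos =>
    set P := pinv L with hPdef
    obtain ⟨h1, h2, h3, h4⟩ : L * P * L = L ∧ P * L * P = P ∧ (L * P)ᵀ = L * P ∧ (P * L)ᵀ = P * L := by
      rw [hPdef, pinv, dif_pos h]; exact h.choose_spec
    have hLsymm : Lᵀ = L := G.isSymm_lapMatrix (R := ℝ)
    -- L (P b) = b
    have hQb : (L * P) *ᵥ b = b := by
      set v : V → ℝ := b - (L * P) *ᵥ b with hvdef
      have hmv : (L * P) *ᵥ b = b ᵥ* (L * P) := by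
        rw [← h3, Matrix.mulVec_transpose, h3]
      have hvL : v ᵥ* L = 0 := by
        rw [hvdef, Matrix.sub_vecMul, hmv, Matrix.vecMul_vecMul, h1, sub_self]
      have hv0 : L *ᵥ v = 0 := by
        conv_lhs => rw [← hLsymm]
        rw [Matrix.mulVec_transpose, hvL]
      have hconst : ∀ a c : V, v a = v c := by
        have := (G.lapMatrix_mulVec_eq_zero_iff_forall_reachable (x := v)).mp
          (by exact hv0)
        exact fun a c => this a c (hG.preconnected a c)
      have hones : (fun _ : V => (1:ℝ)) ᵥ* L = 0 := by
        conv_lhs => rw [← hLsymm]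
        rw [Matrix.vecMul_transpose]
        exact G.lapMatrix_mulVec_const_eq_zero
      have hsumQ : (fun _ : V => (1:ℝ)) ⬝ᵥ ((L * P) *ᵥ b) = 0 := by
        rw [Matrix.dotProduct_mulVec, ← Matrix.vecMul_vecMul, hones, Matrix.zero_vecMul,
          zero_dotProduct]
      have hsumb : (fun _ : V => (1:ℝ)) ⬝ᵥ b = 0 := by
        rw [hbdef, dotProduct_sub, dotProduct_single, dotProduct_single]
        ring
      have hsumv : ∑ u, v u = 0 := by
        have : ∑ u, v u = (fun _ : V => (1:ℝ)) ⬝ᵥ v := by simp [dotProduct]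
        rw [this, hvdef, dotProduct_sub, hsumb, hsumQ, sub_self]
      obtain ⟨u0⟩ := hG.nonempty
      have hcard : (0:ℝ) < Fintype.card V := by
        exact_mod_cast Fintype.card_pos_iff.mpr ⟨u0⟩
      have hv00 : v u0 = 0 := by
        have : ∑ u, v u = (Fintype.card V : ℝ) * v u0 := by
          rw [Finset.sum_congr rfl fun u _ => hconst u u0, Finset.sum_const, nsmul_eq_mul,
            Finset.card_univ]
        rw [hsumv] at this
        have := this.symm
        exact (mul_eq_zero.mp this).resolve_left (by positivity)
      have : v = 0 := funext fun a => by rw [hconst a u0, hv00]; rfl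
      have := congrArg (fun w => (L * P) *ᵥ b + w) this
      simpa [hvdef] using this.symm
    have hLx : L *ᵥ (P *ᵥ b) = b := by rw [Matrix.mulVec_mulVec]; exact hQb
    set x : V → ℝ := P *ᵥ b with hxdef
    set Ω : ℝ := b ⬝ᵥ x with hΩdef
    -- b ⬝ᵥ b = 2
    have hne : i ≠ j := hij.ne
    have hbb : b ⬝ᵥ b = 2 := by
      rw [hbdef]
      simp [dotProduct_sub, sub_dotProduct, dotProduct_single,
        Pi.single_apply, hne, hne.symm]
      norm_num
    -- D = deg i + deg j + 2
    set D : ℝ := b ⬝ᵥ (L *ᵥ b) with hDdef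
    have hD : D = (G.degree i : ℝ) + (G.degree j : ℝ) + 2 := by
      rw [hDdef, hbdef]
      simp only [Matrix.mulVec_sub, Matrix.mulVec_single, dotProduct_sub,
        sub_dotProduct, dotProduct_single, Pi.sub_apply, mul_one]
      simp only [hLdef, SimpleGraph.lapMatrix, SimpleGraph.degMatrix, Matrix.sub_apply,
        Matrix.diagonal_apply_eq, Matrix.diagonal_apply_ne _ hne,
        Matrix.diagonal_apply_ne _ hne.symm, SimpleGraph.adjMatrix_apply,
        if_pos hij, if_pos hij.symm, if_neg (G.loopless.irrefl i), if_neg (G.loopless.irrefl j)]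
      simp [Pi.single_apply, hne, hne.symm, hij, hij.symm]
      ring
    have hDpos : 0 < D := by
      rw [hD]; positivity
    -- symmetry facts
    have hxLb : x ⬝ᵥ (L *ᵥ b) = 2 := by
      rw [Matrix.dotProduct_mulVec]
      have : x ᵥ* L = b := by
        conv_lhs => rw [← hLsymm]
        rw [Matrix.vecMul_transpose] -- wrong direction? x ᵥ* Lᵀ = L *ᵥ x
        exact hLx
      rw [this, hbb]
    have hbLx : b ⬝ᵥ (L *ᵥ x) = 2 := by rw [hLx, hbb]
    have hxLx : x ⬝ᵥ (L *ᵥ x) = Ω := by rw [hLx, dotProduct_comm, hΩdef]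
    -- PSD test
    have hpsd := (SimpleGraph.posSemidef_lapMatrix ℝ G).dotProduct_mulVec_nonneg (x - (2 / D) • b)
    rw [star_trivial] at hpsd
    have hexp : (x - (2 / D) • b) ⬝ᵥ (L *ᵥ (x - (2 / D) • b))
        = Ω - (2/D) * 2 - (2/D) * 2 + (2/D) * (2/D) * D := by
      rw [Matrix.mulVec_sub, Matrix.mulVec_smul, sub_dotProduct,
        dotProduct_sub, dotProduct_sub, smul_dotProduct,
        smul_dotProduct, dotProduct_smul, dotProduct_smul,
        hxLx, hbLx, hxLb, ← hDdef]
      simp [smul_eq_mul]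
      ring
    rw [hexp] at hpsd
    have hΩge : Ω ≥ 4 / D := by
      have h2 : (2/D) * (2/D) * D = 4 / D := by field_simp; ring
      rw [h2] at hpsd
      have : (2/D) * 2 = 4 / D := by ring
      linarith [this ▸ hpsd]
    have hΩpos : 0 < Ω := lt_of_lt_of_le (by positivity) hΩge
    have hres2 : resDist G i j = Ω := hres
    rw [hres2]
    have hdi : (G.degree i : ℝ) ≤ (G.maxDegree : ℝ) := by
      exact_mod_cast G.degree_le_maxDegree i
    have hdj : (G.degree j : ℝ) ≤ (G.maxDegree : ℝ) := by
      exact_mod_cast G.degree_le_maxDegree j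
    have hinv : 1 / Ω ≤ D / 4 := by
      rw [div_le_div_iff₀ hΩpos (by norm_num)]
      calc (1:ℝ) * 4 = 4 := by ring
      _ ≤ Ω * D := by
          have := (div_le_iff₀ hDpos).mp hΩge  -- 4/D ≤ Ω ↔ 4 ≤ Ω * D
          nlinarith
      _ = D * Ω := mul_comm _ _
    have : D / 4 ≤ ((G.maxDegree : ℝ) + 1) / 2 := by rw [hD]; linarith
    linarith

theorem stmt12 {V : Type*} [Fintype V] [DecidableEq V] (G : SimpleGraph V) [DecidableRel G.Adj]
    (hG : G.Connected) (m : ℕ) (hm : m = G.edgeFinset.card) :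
    cyclicity G ≤ (m : ℝ) * ((G.maxDegree : ℝ) - 1) / 2 := by
  have hsub : ‹DecidableRel G.Adj› = Classical.decRel G.Adj := Subsingleton.elim _ _
  subst hsub
  letI : DecidableRel G.Adj := Classical.decRel G.Adj
  rw [cyclicity]
  calc ∑ e ∈ G.edgeFinset,
        Sym2.lift ⟨fun i j => 1 / resDist G i j - 1,
          fun i j => by simp only []; rw [resDist_comm G i j]⟩ e
      ≤ ∑ _e ∈ G.edgeFinset, ((G.maxDegree : ℝ) - 1) / 2 := by
        refine Finset.sum_le_sum ?_
        intro e he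
        revert he
        refine Sym2.ind ?_ e
        intro i j he
        rw [Sym2.lift_mk]
        exact key G hG ((SimpleGraph.mem_edgeSet G).mp (SimpleGraph.mem_edgeFinset.mp he))
    _ = (m : ℝ) * ((G.maxDegree : ℝ) - 1) / 2 := by
        rw [Finset.sum_const, hm, nsmul_eq_mul]
        ring
end

section
/- Let G be a finite connected simple graph of order n ≥ 3 that is not complete. Then the number of unordered pairs of distinct vertices {u,v} with Ω_G(u,v) = 2/n is at most (n² − 5n + 8)/2. -/
open Matrix Finset

lemma exists_preimage {V : Type*} [Fintype V] [DecidableEq V] (G : SimpleGraph V)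
    [DecidableRel G.Adj] (hG : G.Connected) (x : V → ℝ) (hx : ∑ i, x i = 0) :
    ∃ z, G.lapMatrix ℝ *ᵥ z = x := by
  have hne : Nonempty V := hG.nonempty
  inhabit V
  set L := G.lapMatrix ℝ with hLdef
  set f := Matrix.toLin' L with hf
  -- kernel is the constants
  have hker : LinearMap.ker f = Submodule.span ℝ {fun _ => (1:ℝ)} := by
    ext y
    rw [LinearMap.mem_ker, hf, Matrix.toLin'_apply, G.lapMatrix_mulVec_eq_zero_iff_forall_reachable,
      Submodule.mem_span_singleton]
    constructor
    · intro h
      exact ⟨y default, by funext i; simp [h i default (hG.preconnected i default)]⟩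
    · rintro ⟨a, rfl⟩ i j _; rfl
  have h1ne : (fun _ => (1:ℝ)) ≠ (0 : V → ℝ) := by
    intro h; exact one_ne_zero (congrFun h default)
  have hkerrank : Module.finrank ℝ (LinearMap.ker f) = 1 := by
    rw [hker]; exact finrank_span_singleton h1ne
  -- sum functional
  set S : (V → ℝ) →ₗ[ℝ] ℝ := ∑ i, LinearMap.proj i with hS
  have hSapp : ∀ y : V → ℝ, S y = ∑ i, y i := by
    intro y; simp [hS]
  have hSsurj : Function.Surjective S := by
    intro c; exact ⟨Pi.single default c, by rw [hSapp]; simp⟩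
  have hSker : Module.finrank ℝ (LinearMap.ker S) + 1 = Fintype.card V := by
    have := LinearMap.finrank_range_add_finrank_ker S
    rw [LinearMap.range_eq_top.mpr hSsurj, finrank_top, Module.finrank_self,
      Module.finrank_pi] at this
    omega
  have hrange : Module.finrank ℝ (LinearMap.range f) + 1 = Fintype.card V := by
    have := LinearMap.finrank_range_add_finrank_ker f
    rw [hkerrank, Module.finrank_pi] at this
    omega
  have hrow : ∀ j : V, ∑ i : V, L j i = 0 := by
    intro j
    have := congrFun (G.lapMatrix_mulVec_const_eq_zero (R := ℝ)) j
    simpa [Matrix.mulVec, dotProduct] using this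
  have hcol : ∀ j : V, ∑ i : V, L i j = 0 := by
    intro j
    have hsym : Lᵀ = L := G.isSymm_lapMatrix (R := ℝ)
    calc ∑ i : V, L i j = ∑ i : V, L j i := by
          refine Finset.sum_congr rfl fun i _ => ?_
          conv_lhs => rw [← hsym]
          rfl
      _ = 0 := hrow j
  have hle : LinearMap.range f ≤ LinearMap.ker S := by
    rintro y ⟨z, rfl⟩
    rw [LinearMap.mem_ker, hSapp]
    have : ∀ i, f z i = ∑ j, L i j * z j := by
      intro i; rw [hf, Matrix.toLin'_apply]; rfl
    simp_rw [this]
    rw [Finset.sum_comm]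
    simp_rw [← Finset.sum_mul]
    simp [hcol]
  have heq : LinearMap.range f = LinearMap.ker S :=
    Submodule.eq_of_le_of_finrank_le hle (by omega)
  have hxmem : x ∈ LinearMap.range f := by
    rw [heq, LinearMap.mem_ker, hSapp]; exact hx
  obtain ⟨z, hz⟩ := hxmem
  exact ⟨z, by rw [← Matrix.toLin'_apply L z]; exact hz⟩

lemma key_s14 {V : Type*} [Fintype V] [DecidableEq V] (G : SimpleGraph V) (hG : G.Connected)
    (u v : V) (huv : u ≠ v)
    (h : resDist G u v = 2 / (Fintype.card V : ℝ)) :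
    ∀ w, w ≠ u → G.Adj u w := by
  letI : DecidableRel G.Adj := Classical.decRel _
  have hcard2 : 2 ≤ Fintype.card V := Fintype.one_lt_card_iff_nontrivial.mpr ⟨⟨u, v, huv⟩⟩
  set c : ℝ := (Fintype.card V : ℝ) with hc
  have hcpos : (0:ℝ) < c := by
    rw [hc]; exact_mod_cast Nat.lt_of_lt_of_le Nat.zero_lt_two hcard2
  rw [resDist] at h
  set L := G.lapMatrix ℝ with hLdef
  set x : V → ℝ := Pi.single u 1 - Pi.single v 1 with hx
  by_cases hex : ∃ B, L * B * L = L ∧ B * L * B = B ∧ (L * B)ᵀ = L * B ∧ (B * L)ᵀ = B * L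
  case neg =>
    exfalso
    rw [pinv, dif_neg hex] at h
    rw [Matrix.zero_mulVec, dotProduct_zero] at h
    have : (2:ℝ)/c ≠ 0 := by positivity
    exact this h.symm
  case pos =>
    rw [pinv, dif_pos hex] at h
    obtain ⟨hP1, hP2, hP3, hP4⟩ := hex.choose_spec
    set B := hex.choose with hB
    -- preimage
    have hsum : ∑ i, x i = 0 := by
      simp [hx, Finset.sum_sub_distrib]
    obtain ⟨z, hz⟩ := exists_preimage G hG x hsum
    set y : V → ℝ := B *ᵥ x with hy
    have hLy : L *ᵥ y = x := by
      rw [hy, ← hz, Matrix.mulVec_mulVec, Matrix.mulVec_mulVec, hP1]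
    -- dot products
    have hxx : x ⬝ᵥ x = 2 := by
      simp [hx, sub_dotProduct, dotProduct_sub, single_dotProduct,
        dotProduct_single, Pi.single_apply, huv, huv.symm]
      norm_num
    have hxLy : x ⬝ᵥ L *ᵥ y = 2 := by rw [hLy, hxx]
    have hyLy : y ⬝ᵥ L *ᵥ y = 2 / c := by
      rw [hLy, dotProduct_comm]; exact h
    have hsymm : ∀ a b : V → ℝ, a ⬝ᵥ L *ᵥ b = b ⬝ᵥ L *ᵥ a := by
      intro a b
      have hsym : Lᵀ = L := G.isSymm_lapMatrix (R := ℝ)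
      rw [Matrix.dotProduct_mulVec, ← Matrix.mulVec_transpose, hsym, dotProduct_comm]
    set Q : ℝ := x ⬝ᵥ L *ᵥ x with hQ
    -- Cauchy–Schwarz via discriminant
    have hpsd := (SimpleGraph.posSemidef_lapMatrix ℝ G).dotProduct_mulVec_nonneg
    have hquad : ∀ t : ℝ, 0 ≤ (y ⬝ᵥ L *ᵥ y) * (t * t) + (2 * (x ⬝ᵥ L *ᵥ y)) * t + Q := by
      intro t
      have h0 := hpsd (x + t • y)
      rw [star_trivial] at h0
      have hexp : (x + t • y) ⬝ᵥ L *ᵥ (x + t • y)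
          = (y ⬝ᵥ L *ᵥ y) * (t * t) + (2 * (x ⬝ᵥ L *ᵥ y)) * t + Q := by
        rw [Matrix.mulVec_add, Matrix.mulVec_smul, add_dotProduct,
          smul_dotProduct, dotProduct_add, dotProduct_add,
          dotProduct_smul, dotProduct_smul, hsymm y x]
        simp only [smul_eq_mul]
        ring
      rw [hexp] at h0
      exact_mod_cast h0
    have hdisc := discrim_le_zero hquad
    rw [discrim] at hdisc
    rw [hxLy, hyLy] at hdisc
    -- so 16 - 4 * (2/c) * Q ≤ 0, i.e. Q ≥ 2c
    have hQge : 2 * c ≤ Q := by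
      have h8 : (16:ℝ) ≤ 8 * Q / c := by
        have : (4:ℝ) * (2 / c) * Q = 8 * Q / c := by ring
        rw [this] at hdisc; linarith [hdisc]
      rw [le_div_iff₀ hcpos] at h8
      linarith
    -- compute Q
    have hQval : Q = (G.degree u : ℝ) + (G.degree v : ℝ)
        + 2 * (if G.Adj u v then (1:ℝ) else 0) := by
      have hform : Q = L u u - L u v - L v u + L v v := by
        rw [hQ, hx]
        simp [sub_dotProduct, Matrix.mulVec_sub, Matrix.mulVec_single,
          dotProduct_sub, single_dotProduct]
        ring
      have huu : L u u = (G.degree u : ℝ) := by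
        simp [hLdef, SimpleGraph.lapMatrix, SimpleGraph.degMatrix]
      have hvv : L v v = (G.degree v : ℝ) := by
        simp [hLdef, SimpleGraph.lapMatrix, SimpleGraph.degMatrix]
      have huv' : L u v = -(if G.Adj u v then (1:ℝ) else 0) := by
        simp [hLdef, SimpleGraph.lapMatrix, SimpleGraph.degMatrix, Matrix.diagonal, huv]
      have hvu' : L v u = -(if G.Adj v u then (1:ℝ) else 0) := by
        simp [hLdef, SimpleGraph.lapMatrix, SimpleGraph.degMatrix, Matrix.diagonal, huv.symm]
      rw [hform, huu, hvv, huv', hvu']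
      have : G.Adj v u ↔ G.Adj u v := ⟨fun h => h.symm, fun h => h.symm⟩
      simp only [this]
      ring
    -- conclude
    by_contra hcon
    push_neg at hcon
    obtain ⟨w, hwne, hnadj⟩ := hcon
    have hdegu : G.degree u + 2 ≤ Fintype.card V := by
      have hsub : G.neighborFinset u ⊆ (Finset.univ.erase w).erase u := by
        intro a ha
        rw [SimpleGraph.mem_neighborFinset] at ha
        refine Finset.mem_erase.mpr ⟨fun hau => G.irrefl (hau ▸ ha), Finset.mem_erase.mpr
          ⟨fun haw => hnadj (haw ▸ ha), Finset.mem_univ a⟩⟩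
      have hcard := Finset.card_le_card hsub
      rw [Finset.card_erase_of_mem (Finset.mem_erase.mpr ⟨Ne.symm hwne, Finset.mem_univ u⟩),
        Finset.card_erase_of_mem (Finset.mem_univ w), Finset.card_univ] at hcard
      rw [← SimpleGraph.card_neighborFinset_eq_degree]
      omega
    have hdegv : G.degree v + 1 ≤ Fintype.card V := G.degree_lt_card_verts v
    have hru : (G.degree u : ℝ) ≤ c - 2 := by
      have h' : ((G.degree u + 2 : ℕ) : ℝ) ≤ c := by rw [hc]; exact_mod_cast hdegu
      push_cast at h'; linarith
    have hrv : (G.degree v : ℝ) ≤ c - 1 := by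
      rw [hc]
      have : ((G.degree v : ℝ) + 1 ≤ (Fintype.card V : ℝ)) := by exact_mod_cast hdegv
      linarith
    have hif : (if G.Adj u v then (1:ℝ) else 0) ≤ 1 := by split <;> norm_num
    rw [hQval] at hQge
    linarith

theorem stmt14 {V : Type*} [Fintype V] [DecidableEq V] (G : SimpleGraph V)
    (hG : G.Connected) (n : ℕ) (hn : n = Fintype.card V) (h3 : 3 ≤ n) (hnc : G ≠ ⊤) :
    (({p : Sym2 V | ¬ p.IsDiag ∧
        Sym2.lift ⟨resDist G, fun a b => resDist_comm G a b⟩ p = 2 / (n : ℝ)}.ncard : ℝ))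
      ≤ ((n : ℝ) ^ 2 - 5 * n + 8) / 2 := by
  classical
  set S : Set (Sym2 V) := {p : Sym2 V | ¬ p.IsDiag ∧
      Sym2.lift ⟨resDist G, fun a b => resDist_comm G a b⟩ p = 2 / (n : ℝ)} with hS
  set Fd : Finset V := Finset.univ.filter (fun a => ∀ w, w ≠ a → G.Adj a w) with hFd
  -- S is contained in the pairs from Fd
  have hsub : S ⊆ ↑(Fd.offDiag.image Sym2.mk.uncurry) := by
    intro p hp
    induction p using Sym2.ind with
    | _ a b =>
      obtain ⟨hdiag, hres⟩ := hp
      have hab : a ≠ b := by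
        intro hab; exact hdiag (by rw [hab]; exact Sym2.mk_isDiag_iff.mpr rfl)
      rw [Sym2.lift_mk] at hres
      have hres' : resDist G a b = 2 / (Fintype.card V : ℝ) := by rw [← hn]; exact hres
      have ha : ∀ w, w ≠ a → G.Adj a w := key_s14 G hG a b hab hres'
      have hb : ∀ w, w ≠ b → G.Adj b w := by
        refine key_s14 G hG b a hab.symm ?_
        rw [resDist_comm]; exact hres'
      simp only [Finset.coe_image, Set.mem_image, Finset.mem_coe, Finset.mem_offDiag]
      exact ⟨(a, b), ⟨Finset.mem_filter.mpr ⟨Finset.mem_univ a, ha⟩,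
        Finset.mem_filter.mpr ⟨Finset.mem_univ b, hb⟩, hab⟩, rfl⟩
  have hcount : S.ncard ≤ (Fd.card).choose 2 := by
    have := Set.ncard_le_ncard hsub (Fd.offDiag.image Sym2.mk.uncurry).finite_toSet
    rwa [Set.ncard_coe_finset, Sym2.card_image_offDiag] at this
  -- Fd has at most n - 2 elements
  have hpair : ∃ a b : V, a ≠ b ∧ ¬ G.Adj a b := by
    by_contra hcon
    push_neg at hcon
    apply hnc
    ext a b
    simp only [SimpleGraph.top_adj]
    exact ⟨fun h => G.ne_of_adj h, fun h => hcon a b h⟩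
  obtain ⟨a, b, hab, hnadj⟩ := hpair
  have hFdcard : Fd.card ≤ n - 2 := by
    have hsub2 : Fd ⊆ (Finset.univ.erase a).erase b := by
      intro w hw
      rw [hFd, Finset.mem_filter] at hw
      refine Finset.mem_erase.mpr ⟨?_, Finset.mem_erase.mpr ⟨?_, Finset.mem_univ w⟩⟩
      · intro hwb; subst hwb
        exact hnadj ((hw.2 a hab).symm)
      · intro hwa; subst hwa
        exact hnadj (hw.2 b hab.symm)
    have hcard := Finset.card_le_card hsub2
    rw [Finset.card_erase_of_mem (Finset.mem_erase.mpr ⟨hab.symm, Finset.mem_univ b⟩),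
      Finset.card_erase_of_mem (Finset.mem_univ a), Finset.card_univ, ← hn] at hcard
    omega
  have hchoose : (Fd.card).choose 2 ≤ (n - 2).choose 2 := Nat.choose_le_choose 2 hFdcard
  have hfinal : (S.ncard : ℝ) ≤ ((n - 2 : ℕ).choose 2 : ℝ) := by
    exact_mod_cast le_trans hcount hchoose
  refine le_trans hfinal ?_
  rw [Nat.cast_choose_two]
  have hcast : ((n - 2 : ℕ) : ℝ) = (n : ℝ) - 2 := by
    have : (2:ℕ) ≤ n := by omega
    push_cast [Nat.cast_sub this]; ring
  rw [hcast]
  have hn3 : (3:ℝ) ≤ (n:ℝ) := by exact_mod_cast h3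
  nlinarith [hn3]
end
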